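/- arXiv:2202.04116 — 6 statements merged into one kernel-verified Lean document; each statement's English description precedes it below -/
import Mathlib

section
/- Let n ≥ 2 and let a_0, a_1, …, a_{n−1} be real numbers with a_{j−1} ≠ a_j for all j ∈ {1,…,n−1} and a_{n−1} ≠ 0. Then the n×n L-matrix A_n with entries (A_n)_{i,j} = a_{max(i,j)} is invertible, and its inverse is the symmetric tridiagonal matrix with (A_n^{−1})_{0,0} = b_0, (A_n^{−1})_{j,j} = b_{j−1} + b_j for 1 ≤ j ≤ n−2, (A_n^{−1})_{n−1,n−1} = (a_{n−2}/a_{n−1}) b_{n−2}, (A_n^{−1})_{j,j+1} = (A_n^{−1})_{j+1,j} = −b_j for 0 ≤ j ≤ n−2, and all other entries zero, where b_j := 1/(a_j − a_{j+1}). -/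
/-- Let `n ≥ 2` and `a_0, …, a_{n−1}` be real numbers with consecutive values
distinct and `a_{n−1} ≠ 0`. Then the L-matrix `A_n` with entries `(A_n)_{i,j} = a_{max(i,j)}`
is invertible with tridiagonal inverse `T` given by `T_{0,0} = b_0`,
`T_{j,j} = b_{j−1} + b_j` for `1 ≤ j ≤ n−2`, `T_{n−1,n−1} = (a_{n−2}/a_{n−1}) b_{n−2}`,
`T_{j,j+1} = T_{j+1,j} = −b_j`, all other entries `0`, where `b_j = 1/(a_j − a_{j+1})`. -/
theorem L_matrix_inverse (n : ℕ) (hn : 2 ≤ n) (a : ℕ → ℝ)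
    (ha : ∀ j : ℕ, 1 ≤ j → j ≤ n - 1 → a (j - 1) ≠ a j) (ha' : a (n - 1) ≠ 0)
    (b : ℕ → ℝ) (hb : ∀ j, b j = 1 / (a j - a (j + 1)))
    (A T : Matrix (Fin n) (Fin n) ℝ)
    (hA : ∀ i j : Fin n, A i j = a (max (i : ℕ) (j : ℕ)))
    (hT : ∀ i j : Fin n, T i j =
      if (i : ℕ) = j then
        (if (i : ℕ) = 0 then b 0
         else if (i : ℕ) = n - 1 then (a (n - 2) / a (n - 1)) * b (n - 2)
         else b ((i : ℕ) - 1) + b (i : ℕ))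
      else if (i : ℕ) + 1 = j ∨ (j : ℕ) + 1 = i then -(b (min (i : ℕ) (j : ℕ)))
      else 0) :
    IsUnit A.det ∧ A⁻¹ = T := by
  have hAT : A * T = 1 := by
    ext i j
    rw [Matrix.mul_apply, Matrix.one_apply]
    have hij : (i = j) ↔ ((i : ℕ) = (j : ℕ)) := Fin.ext_iff
    have hIlt : (i : ℕ) < n := i.isLt
    have hJlt : (j : ℕ) < n := j.isLt
    set I := (i : ℕ) with hI
    set J := (j : ℕ) with hJ
    have hsum : (∑ k : Fin n, A i k * T k j) = ∑ k ∈ Finset.range n,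
        a (max I k) * (if k = J then
          (if k = 0 then b 0
           else if k = n - 1 then (a (n - 2) / a (n - 1)) * b (n - 2)
           else b (k - 1) + b k)
         else if k + 1 = J ∨ J + 1 = k then -(b (min k J)) else 0) := by
      rw [← Fin.sum_univ_eq_sum_range]
      refine Finset.sum_congr rfl fun k _ => ?_
      rw [hA, hT]
    rw [hsum]
    rcases Nat.lt_or_ge J 1 with hJ0 | hJ1
    · -- J = 0
      have hJ0 : J = 0 := by omega
      have hsub : ({0, 1} : Finset ℕ) ⊆ Finset.range n := by
        intro x hx; simp only [Finset.mem_insert, Finset.mem_singleton] at hx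
        simp only [Finset.mem_range]; omega
      rw [← Finset.sum_subset hsub (by
        intro x hx hx'
        simp only [Finset.mem_insert, Finset.mem_singleton] at hx'
        push_neg at hx'
        rw [if_neg (by omega), if_neg (by omega)]
        ring)]
      rw [Finset.sum_pair (by norm_num)]
      rw [if_pos (by omega), if_pos rfl, if_neg (by omega), if_pos (by omega)]
      have ha01 : a 0 ≠ a 1 := by simpa using ha 1 le_rfl (by omega)
      have hb0 : b 0 = 1 / (a 0 - a 1) := by simpa using hb 0
      have hne : a 0 - a 1 ≠ 0 := sub_ne_zero.mpr ha01
      have hmin : min 1 J = 0 := by omega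
      rw [hmin, hb0]
      rcases Nat.eq_zero_or_pos I with hI0 | hI1
      · rw [if_pos (by omega)]
        have h1 : max I 0 = 0 := by omega
        have h2 : max I 1 = 1 := by omega
        rw [h1, h2]
        field_simp
        ring
      · rw [if_neg (by omega)]
        have h1 : max I 0 = I := by omega
        have h2 : max I 1 = I := by omega
        rw [h1, h2]
        ring
    · rcases Nat.lt_or_ge J (n - 1) with hJmid | hJtop
      · -- 1 ≤ J < n - 1
        have hsub : ({J - 1, J, J + 1} : Finset ℕ) ⊆ Finset.range n := by
          intro x hx
          simp only [Finset.mem_insert, Finset.mem_singleton] at hx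
          simp only [Finset.mem_range]; omega
        rw [← Finset.sum_subset hsub (by
          intro x hx hx'
          simp only [Finset.mem_insert, Finset.mem_singleton] at hx'
          push_neg at hx'
          rw [if_neg (by omega), if_neg (by omega)]
          ring)]
        rw [Finset.sum_insert (by
            simp only [Finset.mem_insert, Finset.mem_singleton]; omega),
          Finset.sum_insert (by simp only [Finset.mem_singleton]; omega),
          Finset.sum_singleton]
        rw [if_neg (by omega), if_pos (by left; omega),
          if_pos rfl, if_neg (by omega), if_neg (by omega),
          if_neg (by omega), if_pos (by right; rfl)]
        have hmin1 : min (J - 1) J = J - 1 := by omega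
        have hmin2 : min (J + 1) J = J := by omega
        rw [hmin1, hmin2]
        have haj : a (J - 1) ≠ a J := ha J hJ1 (by omega)
        have haj' : a J ≠ a (J + 1) := by
          have := ha (J + 1) (by omega) (by omega)
          simpa using this
        have hbj1 : b (J - 1) = 1 / (a (J - 1) - a J) := by
          have := hb (J - 1)
          rwa [show J - 1 + 1 = J by omega] at this
        have hbj : b J = 1 / (a J - a (J + 1)) := hb J
        have hne1 : a (J - 1) - a J ≠ 0 := sub_ne_zero.mpr haj
        have hne2 : a J - a (J + 1) ≠ 0 := sub_ne_zero.mpr haj'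
        rcases Nat.lt_or_ge I J with hIJ | hIJ
        · rw [if_neg (by omega)]
          have h1 : max I (J - 1) = J - 1 := by omega
          have h2 : max I J = J := by omega
          have h3 : max I (J + 1) = J + 1 := by omega
          rw [h1, h2, h3, hbj1, hbj]
          field_simp
          ring
        · rcases Nat.eq_or_lt_of_le hIJ with hIJ' | hIJ'
          · rw [if_pos (by omega)]
            have h1 : max I (J - 1) = J := by omega
            have h2 : max I J = J := by omega
            have h3 : max I (J + 1) = J + 1 := by omega
            rw [h1, h2, h3, hbj1, hbj]
            field_simp
            ring
          · rw [if_neg (by omega)]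
            have h1 : max I (J - 1) = I := by omega
            have h2 : max I J = I := by omega
            have h3 : max I (J + 1) = I := by omega
            rw [h1, h2, h3]
            ring
      · -- J = n - 1
        have hJtop : J = n - 1 := by omega
        have hsub : ({n - 2, n - 1} : Finset ℕ) ⊆ Finset.range n := by
          intro x hx
          simp only [Finset.mem_insert, Finset.mem_singleton] at hx
          simp only [Finset.mem_range]; omega
        rw [← Finset.sum_subset hsub (by
          intro x hx hx'
          simp only [Finset.mem_insert, Finset.mem_singleton] at hx'
          push_neg at hx'
          simp only [Finset.mem_range] at hx
          rw [if_neg (by omega), if_neg (by omega)]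
          ring)]
        rw [Finset.sum_pair (by omega)]
        rw [if_neg (by omega), if_pos (by left; omega),
          if_pos (by omega), if_neg (by omega), if_pos (by omega)]
        have hmin : min (n - 2) J = n - 2 := by omega
        rw [hmin]
        have hmaxtop : max I (n - 1) = n - 1 := by omega
        rw [hmaxtop]
        have han : a (n - 2) ≠ a (n - 1) := by
          have := ha (n - 1) (by omega) le_rfl
          rwa [show n - 1 - 1 = n - 2 by omega] at this
        have hbn : b (n - 2) = 1 / (a (n - 2) - a (n - 1)) := by
          have := hb (n - 2)
          rwa [show n - 2 + 1 = n - 1 by omega] at this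
        have hnen : a (n - 2) - a (n - 1) ≠ 0 := sub_ne_zero.mpr han
        rcases Nat.eq_or_lt_of_le (show I ≤ n - 1 by omega) with hItop | hItop
        · rw [if_pos (by omega)]
          have h1 : max I (n - 2) = n - 1 := by omega
          rw [h1, hbn]
          field_simp
          ring
        · rw [if_neg (by omega)]
          have h1 : max I (n - 2) = n - 2 := by omega
          rw [h1, hbn]
          field_simp
          ring
  exact ⟨Matrix.isUnit_det_of_right_inverse hAT, Matrix.inv_eq_right_inv hAT⟩
end

section
/- Let n ≥ 2 and let a_0, a_1, …, a_n be real numbers with a_j ≠ a_{j+1} for all j ∈ {0,…,n−1}. Set b_j := 1/(a_j − a_{j+1}), and for m ∈ ℕ let B_m be the m×m symmetric tridiagonal (Jacobi) matrix with diagonal entries (B_m)_{0,0} = b_0, (B_m)_{j,j} = b_{j−1} + b_j for 1 ≤ j ≤ m−1, and off-diagonal entries (B_m)_{j,j+1} = (B_m)_{j+1,j} = −b_j for 0 ≤ j ≤ m−2. Then for every z ∈ ℂ, det(I − z A_n) = (−1)^n [ ∏_{j=1}^{n−1} (a_{j−1} − a_j) ] · [ a_{n−1} det(zI − B_n) + a_n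 b_{n−1} det(zI − B_{n−1}) ], where A_n is the n×n L-matrix with entries (A_n)_{i,j} = a_{max(i,j)}. -/
open Matrix Finset

namespace LMJ

def tri (d e f : ℕ → ℂ) (m : ℕ) : Matrix (Fin m) (Fin m) ℂ :=
  fun i j =>
    if (i : ℕ) = j then d i
    else if (i : ℕ) + 1 = j then f i
    else if (j : ℕ) + 1 = i then e j
    else 0

def tdet (d e f : ℕ → ℂ) : ℕ → ℂ
  | 0 => 1
  | 1 => d 0
  | (m+2) =>
      d 0 * tdet (fun i => d (i+1)) (fun i => e (i+1)) (fun i => f (i+1)) (m+1)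
        - f 0 * e 0 * tdet (fun i => d (i+2)) (fun i => e (i+2)) (fun i => f (i+2)) m

lemma tri_sub_one (d e f : ℕ → ℂ) (m : ℕ) :
    (tri d e f (m+2)).submatrix Fin.succ Fin.succ
      = tri (fun i => d (i+1)) (fun i => e (i+1)) (fun i => f (i+1)) (m+1) := by
  ext i j
  simp only [submatrix_apply, tri, Fin.val_succ]
  split_ifs <;> first | rfl | omega

lemma tri_sub_two (d e f : ℕ → ℂ) (m : ℕ) (g h : Fin m → Fin (m+2))
    (hg : ∀ i, (g i : ℕ) = i + 2) (hh : ∀ i, (h i : ℕ) = i + 2) :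
    (tri d e f (m+2)).submatrix g h
      = tri (fun i => d (i+2)) (fun i => e (i+2)) (fun i => f (i+2)) m := by
  ext i j
  simp only [submatrix_apply, tri, hg, hh]
  split_ifs <;> first | rfl | omega

theorem det_tri : ∀ (m : ℕ) (d e f : ℕ → ℂ), (tri d e f m).det = tdet d e f m := by
  intro m
  induction m using Nat.strong_induction_on with
  | _ m ih =>
    match m with
    | 0 => intro d e f; simp [tdet]
    | 1 =>
      intro d e f
      simp [tdet, det_fin_one, tri]
    | (m+2) =>
      intro d e f
      rw [det_succ_row_zero, Fin.sum_univ_succ, Fin.sum_univ_succ]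
      have hz : ∀ j : Fin m,
          tri d e f (m+2) 0 j.succ.succ = 0 := by
        intro j
        simp only [tri, Fin.val_succ, Fin.val_zero]
        split_ifs <;> first | rfl | omega | simp_all
      have h00 : tri d e f (m+2) 0 0 = d 0 := by simp [tri]
      have h01 : tri d e f (m+2) 0 ((0 : Fin (m+1)).succ) = f 0 := by
        simp only [tri, Fin.succ_zero_eq_one, Fin.val_zero, Fin.val_one]
        norm_num
      have hsa0 : (Fin.succAbove (0 : Fin (m+2))) = Fin.succ := by
        funext i; rfl
      -- the N matrix
      set N : Matrix (Fin (m+1)) (Fin (m+1)) ℂ :=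
        (tri d e f (m+2)).submatrix Fin.succ (Fin.succAbove ((0:Fin (m+1)).succ)) with hN
      have hNz : ∀ i : Fin m, N i.succ 0 = 0 := by
        intro i
        have h10 : ((0:Fin (m+1)).succ).succAbove 0 = 0 := rfl
        simp only [hN, submatrix_apply, h10, tri, Fin.val_succ, Fin.val_zero]
        split_ifs <;> first | rfl | omega | simp_all
      have hN00 : N 0 0 = e 0 := by
        have h10 : ((0:Fin (m+1)).succ).succAbove 0 = 0 := rfl
        simp only [hN, submatrix_apply, h10, tri, Fin.val_succ, Fin.val_zero, Fin.succ_zero_eq_one,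
          Fin.val_one]
        norm_num
      have hNsub : N.submatrix (Fin.succAbove (0 : Fin (m+1))) Fin.succ
          = tri (fun i => d (i+2)) (fun i => e (i+2)) (fun i => f (i+2)) m := by
        rw [hN, submatrix_submatrix]
        apply tri_sub_two
        · intro i
          simp [Function.comp, Fin.zero_succAbove, Fin.val_succ]
        · intro i
          have : ((0:Fin (m+1)).succ).succAbove i.succ = i.succ.succ := by
            apply Fin.succAbove_of_le_castSucc
            simp [Fin.le_def, Fin.succ_zero_eq_one]
          simp [Function.comp, this, Fin.val_succ]
      have hdetN : N.det = e 0 * tdet (fun i => d (i+2)) (fun i => e (i+2)) (fun i => f (i+2)) m := by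
        rw [det_succ_column_zero, Fin.sum_univ_succ]
        simp only [hNz, hN00, hNsub, Fin.val_zero, pow_zero, one_mul, mul_zero, zero_mul,
          Finset.sum_const_zero, add_zero]
        rw [ih m (by omega)]
      rw [hsa0, tri_sub_one, h00, h01, hdetN, ih (m+1) (by omega)]
      simp only [hz, Fin.val_zero, pow_zero, one_mul, mul_zero, zero_mul,
        Finset.sum_const_zero, add_zero, Fin.val_succ, pow_succ, pow_zero]
      show _ = tdet d e f (m+2)
      rw [tdet]
      ring

def Dd (z : ℂ) (β : ℕ → ℂ) (m : ℕ) : ℂ :=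
  tdet (fun i => if i = 0 then z - β 0 else z - β (i-1) - β i) β β m

def Ed (z : ℂ) (β : ℕ → ℂ) (m : ℕ) : ℂ :=
  tdet (fun i => z - β i - β (i+1)) (fun i => β (i+1)) (fun i => β (i+1)) m

lemma Dd_expand (z : ℂ) (β : ℕ → ℂ) (m : ℕ) :
    Dd z β (m+2) = (z - β 0) * Ed z β (m+1) - β 0 * β 0 * Ed z (fun i => β (i+1)) m := by
  rw [Dd, tdet, Ed, Ed]
  norm_num

lemma Ed_rec (z : ℂ) (β : ℕ → ℂ) (m : ℕ) :
    Ed z β (m+2) = (z - β 0 - β 1) * Ed z (fun i => β (i+1)) (m+1)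
      - β 1 * β 1 * Ed z (fun i => β (i+2)) m := by
  rw [Ed, tdet, Ed, Ed]

lemma Dd_rec (z : ℂ) : ∀ (m : ℕ) (β : ℕ → ℂ),
    Dd z β (m+2) = (z - 2 * β 0) * Dd z (fun i => β (i+1)) (m+1)
      - β 0 * β 1 * Dd z (fun i => β (i+2)) m
  | 0, β => by simp [Dd, tdet]; ring
  | 1, β => by simp [Dd, tdet]; ring
  | (m+2), β => by
    rw [show m+2+2 = (m+2)+2 from rfl, Dd_expand, Dd_expand, Dd_expand,
      Ed_rec, Ed_rec]
    ring

def Ft (z : ℂ) (α : ℕ → ℂ) (n : ℕ) : ℂ :=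
  tdet (fun i => if i + 1 = n then 1 - z * α i else 2 - z * (α i - α (i+1)))
    (fun _ => -1) (fun _ => -1) n

def Gt (z : ℂ) (α β : ℕ → ℂ) (n : ℕ) : ℂ :=
  (-1)^n * (∏ j ∈ range (n-1), (α j - α (j+1)))
    * (α (n-1) * Dd z β n + α n * β (n-1) * Dd z β (n-1))

lemma Ft_rec (z : ℂ) (α : ℕ → ℂ) (m : ℕ) :
    Ft z α (m+2) = (2 - z * (α 0 - α 1)) * Ft z (fun i => α (i+1)) (m+1)
      - Ft z (fun i => α (i+2)) m := by
  rw [Ft, tdet, Ft, Ft]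
  have h1 : (fun i => if i + 1 + 1 = m + 2 then 1 - z * α (i+1)
        else 2 - z * (α (i+1) - α (i+1+1)))
      = (fun i => if i + 1 = m + 1 then 1 - z * α (i+1) else 2 - z * (α (i+1) - α (i+1+1))) := by
    funext i
    by_cases h : i + 1 = m + 1
    · rw [if_pos (by omega), if_pos h]
    · rw [if_neg (by omega), if_neg h]
  have h2 : (fun i => if i + 2 + 1 = m + 2 then 1 - z * α (i+2)
        else 2 - z * (α (i+2) - α (i+2+1)))
      = (fun i => if i + 1 = m then 1 - z * α (i+2) else 2 - z * (α (i+2) - α (i+2+1))) := by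
    funext i
    by_cases h : i + 1 = m
    · rw [if_pos (by omega), if_pos h]
    · rw [if_neg (by omega), if_neg h]
  rw [if_neg (by omega), h1, h2]
  ring

lemma scalar (z : ℂ) : ∀ (k : ℕ) (α β : ℕ → ℂ),
    (∀ j, j < k + 1 → β j * (α j - α (j+1)) = 1) →
    Ft z α (k+1) = Gt z α β (k+1) := by
  intro k
  induction k using Nat.strong_induction_on with
  | _ k ih =>
    match k with
    | 0 =>
      intro α β hyp
      have h0 := hyp 0 (by omega)
      simp [Ft, Gt, Dd, tdet]
      linear_combination -h0
    | 1 =>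
      intro α β hyp
      have h0 := hyp 0 (by omega)
      have h1 := hyp 1 (by omega)
      simp [Ft, Gt, Dd, tdet]
      linear_combination (2*z*α 1 - β 1 * (α 1 - α 2)) * h0 + (z*(α 0 - α 1) - 1) * h1
    | (k+2) =>
      intro α β hyp
      have h0 := hyp 0 (by omega)
      have h1 := hyp 1 (by omega)
      have i1 := ih (k+1) (by omega) (fun i => α (i+1)) (fun i => β (i+1))
        (fun j hj => hyp (j+1) (by omega))
      have i0 := ih k (by omega) (fun i => α (i+2)) (fun i => β (i+2))
        (fun j hj => hyp (j+2) (by omega))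
      have d2 : Dd z β (k+3) = (z - 2*β 0) * Dd z (fun i => β (i+1)) (k+2)
          - β 0 * β 1 * Dd z (fun i => β (i+2)) (k+1) := Dd_rec z (k+1) β
      have d1 : Dd z β (k+2) = (z - 2*β 0) * Dd z (fun i => β (i+1)) (k+1)
          - β 0 * β 1 * Dd z (fun i => β (i+2)) k := Dd_rec z k β
      have hP1 : (∏ x ∈ range (k+1), (α (x+1) - α (x+2))) = (α 1 - α 2)
          * ∏ x ∈ range k, (α (x+2) - α (x+3)) := by
        rw [prod_range_succ']; ring
      have hP2 : (∏ x ∈ range (k+2), (α x - α (x+1))) = (α 0 - α 1) * ((α 1 - α 2)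
          * ∏ x ∈ range k, (α (x+2) - α (x+3))) := by
        rw [prod_range_succ', prod_range_succ']; ring
      rw [show k+2+1 = k+1+2 from rfl, Ft_rec, i1, i0]
      rw [Gt, Gt, Gt]
      norm_num
      linear_combination
        (-((-1:ℂ)^(k+3) * (α (k+2) * Dd z β (k+3) + α (k+3) * β (k+2) * Dd z β (k+2)))) * hP2
        + (-((-1:ℂ)^(k+3)) * (α 0 - α 1) * (α 1 - α 2) * (∏ x ∈ range k, (α (x+2) - α (x+3)))
            * α (k+2)) * d2
        + (-((-1:ℂ)^(k+3)) * (α 0 - α 1) * (α 1 - α 2) * (∏ x ∈ range k, (α (x+2) - α (x+3)))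
            * (α (k+3) * β (k+2))) * d1
        + ((2 - z*(α 0 - α 1)) * (-1:ℂ)^(k+2)
            * (α (k+2) * Dd z (fun i => β (i+1)) (k+2)
               + α (k+3) * β (k+2) * Dd z (fun i => β (i+1)) (k+1))) * hP1
        + (-2*(α 1 - α 2)*(-1:ℂ)^(k+2)*(∏ x ∈ range k, (α (x+2) - α (x+3)))
             * (α (k+2) * Dd z (fun i => β (i+1)) (k+2)
               + α (k+3) * β (k+2) * Dd z (fun i => β (i+1)) (k+1))
           - (-1:ℂ)^(k+2)*(∏ x ∈ range k, (α (x+2) - α (x+3)))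
             * (α (k+2) * Dd z (fun i => β (i+2)) (k+1)
               + α (k+3) * β (k+2) * Dd z (fun i => β (i+2)) k) * (α 1 - α 2) * β 1) * h0
        + (-((-1:ℂ)^(k+2))*(∏ x ∈ range k, (α (x+2) - α (x+3)))
             * (α (k+2) * Dd z (fun i => β (i+2)) (k+1)
               + α (k+3) * β (k+2) * Dd z (fun i => β (i+2)) k)) * h1


def Rm (n : ℕ) : Matrix (Fin n) (Fin n) ℂ :=
  fun i j => if (i:ℕ) = (j:ℕ) then 1 else if (i:ℕ)+1 = (j:ℕ) then -1 else 0

lemma Rm_det (n : ℕ) : (Rm n).det = 1 := by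
  rw [Matrix.det_of_upperTriangular]
  · apply Finset.prod_eq_one
    intro i _
    simp [Rm]
  · intro i j hij
    simp only [id] at hij
    simp only [Rm]
    rw [if_neg (by omega), if_neg (by omega)]

lemma sum_val_eq (n : ℕ) (x : Fin n) (f : Fin n → ℂ) :
    (∑ k : Fin n, if (k:ℕ) = (x:ℕ) then f k else 0) = f x := by
  have conv : ∀ k : Fin n, ((k:ℕ) = (x:ℕ)) = (k = x) := fun k => propext Fin.val_inj
  simp only [conv]
  rw [Finset.sum_ite_eq' _ _ f]
  simp

lemma sum_val_out (n : ℕ) (v : ℕ) (hv : ¬ v < n) (f : Fin n → ℂ) :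
    (∑ k : Fin n, if (k:ℕ) = v then f k else 0) = 0 := by
  apply Finset.sum_eq_zero
  intro k _
  rw [if_neg (by omega)]

lemma Rm_mul (n : ℕ) (M : Matrix (Fin n) (Fin n) ℂ) (i j : Fin n) :
    (Rm n * M) i j = M i j - (if h : (i:ℕ)+1 < n then M ⟨(i:ℕ)+1, h⟩ j else 0) := by
  rw [Matrix.mul_apply]
  have step : ∀ k : Fin n, Rm n i k * M k j
      = (if (k:ℕ) = (i:ℕ) then M k j else 0) + (if (k:ℕ) = (i:ℕ)+1 then -(M k j) else 0) := by
    intro k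
    simp only [Rm]
    split_ifs <;> first | ring1 | (exfalso; omega)
  rw [Finset.sum_congr rfl (fun k _ => step k), Finset.sum_add_distrib, sum_val_eq]
  congr 1
  by_cases h : (i:ℕ)+1 < n
  · rw [dif_pos h]
    have : (∑ k : Fin n, if (k:ℕ) = (i:ℕ)+1 then -(M k j) else 0)
        = -(M ⟨(i:ℕ)+1, h⟩ j) := by
      have := sum_val_eq n ⟨(i:ℕ)+1, h⟩ (fun k => -(M k j))
      simpa using this
    rw [this]
    ring
  · rw [dif_neg h, sum_val_out n _ h]
    ring

lemma mul_RmT (n : ℕ) (M : Matrix (Fin n) (Fin n) ℂ) (i j : Fin n) :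
    (M * (Rm n)ᵀ) i j = M i j - (if h : (j:ℕ)+1 < n then M i ⟨(j:ℕ)+1, h⟩ else 0) := by
  rw [Matrix.mul_apply]
  have step : ∀ k : Fin n, M i k * (Rm n)ᵀ k j
      = (if (k:ℕ) = (j:ℕ) then M i k else 0) + (if (k:ℕ) = (j:ℕ)+1 then -(M i k) else 0) := by
    intro k
    simp only [Rm, Matrix.transpose_apply]
    split_ifs <;> first | ring1 | (exfalso; omega)
  rw [Finset.sum_congr rfl (fun k _ => step k), Finset.sum_add_distrib, sum_val_eq]
  congr 1
  by_cases h : (j:ℕ)+1 < n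
  · rw [dif_pos h]
    have : (∑ k : Fin n, if (k:ℕ) = (j:ℕ)+1 then -(M i k) else 0)
        = -(M i ⟨(j:ℕ)+1, h⟩) := by
      have := sum_val_eq n ⟨(j:ℕ)+1, h⟩ (fun k => -(M i k))
      simpa using this
    rw [this]
    ring
  · rw [dif_neg h, sum_val_out n _ h]
    ring


lemma reduce (n : ℕ) (hn : 2 ≤ n) (z : ℂ) (α : ℕ → ℂ) (A : Matrix (Fin n) (Fin n) ℂ)
    (hA : ∀ i j : Fin n, A i j = α (max (i:ℕ) (j:ℕ))) :
    (1 - z • A).det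
      = tdet (fun i => if i + 1 = n then 1 - z * α i else 2 - z * (α i - α (i+1)))
        (fun _ => -1) (fun _ => -1) n := by
  have hMe : ∀ i j : Fin n, (1 - z • A) i j
      = (if (i:ℕ) = (j:ℕ) then 1 else 0) - z * α (max (i:ℕ) (j:ℕ)) := by
    intro i j
    have : (1 : Matrix (Fin n) (Fin n) ℂ) i j = if (i:ℕ) = (j:ℕ) then 1 else 0 := by
      rw [Matrix.one_apply]
      exact if_congr Fin.ext_iff rfl rfl
    simp [Matrix.sub_apply, Matrix.smul_apply, hA, this]
  have key : Rm n * (1 - z • A) * (Rm n)ᵀ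
      = tri (fun i => if i + 1 = n then 1 - z * α i else 2 - z * (α i - α (i+1)))
        (fun _ => -1) (fun _ => -1) n := by
    ext i j
    by_cases hj : (j:ℕ)+1 < n
    · by_cases hi : (i:ℕ)+1 < n
      · rw [mul_RmT, dif_pos hj, Rm_mul, Rm_mul, dif_pos hi, dif_pos hi]
        simp only [hMe, Fin.val_mk]
        by_cases hd : (i:ℕ) = (j:ℕ)
        · rw [show max (i:ℕ) (j:ℕ) = (i:ℕ) from by omega,
            show max ((i:ℕ)+1) (j:ℕ) = (i:ℕ)+1 from by omega,
            show max (i:ℕ) ((j:ℕ)+1) = (i:ℕ)+1 from by omega,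
            show max ((i:ℕ)+1) ((j:ℕ)+1) = (i:ℕ)+1 from by omega]
          simp only [tri]
          split_ifs <;> first | ring1 | (exfalso; omega)
        · by_cases hu : (i:ℕ)+1 = (j:ℕ)
          · rw [show max (i:ℕ) (j:ℕ) = (j:ℕ) from by omega,
              show max ((i:ℕ)+1) (j:ℕ) = (j:ℕ) from by omega,
              show max (i:ℕ) ((j:ℕ)+1) = (j:ℕ)+1 from by omega,
              show max ((i:ℕ)+1) ((j:ℕ)+1) = (j:ℕ)+1 from by omega]
            simp only [tri]
            split_ifs <;> first | ring1 | (exfalso; omega)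
          · by_cases hl : (j:ℕ)+1 = (i:ℕ)
            · rw [show max (i:ℕ) (j:ℕ) = (i:ℕ) from by omega,
                show max ((i:ℕ)+1) (j:ℕ) = (i:ℕ)+1 from by omega,
                show max (i:ℕ) ((j:ℕ)+1) = (i:ℕ) from by omega,
                show max ((i:ℕ)+1) ((j:ℕ)+1) = (i:ℕ)+1 from by omega]
              simp only [tri]
              split_ifs <;> first | ring1 | (exfalso; omega)
            · by_cases hlt : (i:ℕ) < (j:ℕ)
              · rw [show max (i:ℕ) (j:ℕ) = (j:ℕ) from by omega,
                  show max ((i:ℕ)+1) (j:ℕ) = (j:ℕ) from by omega,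
                  show max (i:ℕ) ((j:ℕ)+1) = (j:ℕ)+1 from by omega,
                  show max ((i:ℕ)+1) ((j:ℕ)+1) = (j:ℕ)+1 from by omega]
                simp only [tri]
                split_ifs <;> first | ring1 | (exfalso; omega)
              · rw [show max (i:ℕ) (j:ℕ) = (i:ℕ) from by omega,
                  show max ((i:ℕ)+1) (j:ℕ) = (i:ℕ)+1 from by omega,
                  show max (i:ℕ) ((j:ℕ)+1) = (i:ℕ) from by omega,
                  show max ((i:ℕ)+1) ((j:ℕ)+1) = (i:ℕ)+1 from by omega]
                simp only [tri]
                split_ifs <;> first | ring1 | (exfalso; omega)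
      · rw [mul_RmT, dif_pos hj, Rm_mul, Rm_mul, dif_neg hi, dif_neg hi]
        simp only [hMe, Fin.val_mk]
        rw [show max (i:ℕ) (j:ℕ) = (i:ℕ) from by omega,
          show max (i:ℕ) ((j:ℕ)+1) = (i:ℕ) from by omega]
        simp only [tri]
        split_ifs <;> first | ring1 | (exfalso; omega)
    · by_cases hi : (i:ℕ)+1 < n
      · rw [mul_RmT, dif_neg hj, Rm_mul, dif_pos hi]
        simp only [hMe, Fin.val_mk]
        rw [show max (i:ℕ) (j:ℕ) = (j:ℕ) from by omega,
          show max ((i:ℕ)+1) (j:ℕ) = (j:ℕ) from by omega]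
        simp only [tri]
        split_ifs <;> first | ring1 | (exfalso; omega)
      · rw [mul_RmT, dif_neg hj, Rm_mul, dif_neg hi]
        simp only [hMe, Fin.val_mk]
        rw [show max (i:ℕ) (j:ℕ) = (i:ℕ) from by omega]
        simp only [tri]
        split_ifs <;> first | ring1 | (exfalso; omega)
  have hdet : (1 - z • A).det = (Rm n * (1 - z • A) * (Rm n)ᵀ).det := by
    rw [Matrix.det_mul, Matrix.det_mul, Rm_det, Matrix.det_transpose, Rm_det]
    ring
  rw [hdet, key, det_tri]

end LMJ


/-- Let `n ≥ 2` and `a_0, …, a_n` be real numbers with `a_j ≠ a_{j+1}`, and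
set `b_j := 1/(a_j − a_{j+1})`. With `B_m` the `m×m` Jacobi matrix having diagonal
`(b_0, b_0+b_1, …, b_{m−2}+b_{m−1})` and sub/superdiagonal `−b_0, …, −b_{m−2}`, for every
`z ∈ ℂ`:
`det(1 − z A_n) = (−1)^n [∏_{j=1}^{n−1}(a_{j−1} − a_j)]
                  · [a_{n−1} det(z − B_n) + a_n b_{n−1} det(z − B_{n−1})]`,
where `A_n` is the L-matrix with entries `a_{max(i,j)}`. -/
theorem L_matrix_charpoly_jacobi (n : ℕ) (hn : 2 ≤ n) (a : ℕ → ℝ)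
    (ha : ∀ j : ℕ, j ≤ n - 1 → a j ≠ a (j + 1))
    (b : ℕ → ℝ) (hb : ∀ j, b j = 1 / (a j - a (j + 1)))
    (A : Matrix (Fin n) (Fin n) ℂ)
    (hA : ∀ i j : Fin n, A i j = (a (max (i : ℕ) (j : ℕ)) : ℂ))
    (B : (m : ℕ) → Matrix (Fin m) (Fin m) ℂ)
    (hB : ∀ m : ℕ, ∀ i j : Fin m, B m i j =
      if (i : ℕ) = j then
        (if (i : ℕ) = 0 then (b 0 : ℂ) else (b ((i : ℕ) - 1) : ℂ) + (b (i : ℕ) : ℂ))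
      else if (i : ℕ) + 1 = j ∨ (j : ℕ) + 1 = i then -((b (min (i : ℕ) (j : ℕ)) : ℝ) : ℂ)
      else 0)
    (z : ℂ) :
    (1 - z • A).det =
      (-1) ^ n * (∏ j ∈ Finset.Icc 1 (n - 1), ((a (j - 1) : ℂ) - (a j : ℂ)))
        * ((a (n - 1) : ℂ) * (z • (1 : Matrix (Fin n) (Fin n) ℂ) - B n).det
            + (a n : ℂ) * (b (n - 1) : ℂ)
              * (z • (1 : Matrix (Fin (n - 1)) (Fin (n - 1)) ℂ) - B (n - 1)).det) := by
  obtain ⟨m, rfl⟩ : ∃ m, n = m + 2 := ⟨n - 2, by omega⟩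
  have hyp : ∀ j, j < (m + 1) + 1 →
      (fun j => ((b j : ℝ) : ℂ)) j
        * ((fun j => ((a j : ℝ) : ℂ)) j - (fun j => ((a j : ℝ) : ℂ)) (j+1)) = 1 := by
    intro j hj
    have hne : a j - a (j + 1) ≠ 0 := sub_ne_zero.mpr (ha j (by omega))
    have hr : b j * (a j - a (j + 1)) = 1 := by
      rw [hb j]; field_simp
    show ((b j : ℝ) : ℂ) * (((a j : ℝ) : ℂ) - ((a (j+1) : ℝ) : ℂ)) = 1
    exact_mod_cast hr
  have hAcast : ∀ i j : Fin (m+2), A i j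
      = (fun t => ((a t : ℝ) : ℂ)) (max (i : ℕ) (j : ℕ)) := by
    intro i j; exact hA i j
  have hFt : LMJ.tdet (fun i => if i + 1 = m + 2 then 1 - z * ((a i : ℝ) : ℂ)
        else 2 - z * (((a i : ℝ) : ℂ) - ((a (i+1) : ℝ) : ℂ)))
        (fun _ => -1) (fun _ => -1) (m+2)
      = LMJ.Gt z (fun j => ((a j : ℝ) : ℂ)) (fun j => ((b j : ℝ) : ℂ)) (m+2) :=
    LMJ.scalar z (m+1) (fun j => ((a j : ℝ) : ℂ)) (fun j => ((b j : ℝ) : ℂ)) hyp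
  have detB : ∀ k : ℕ, (z • (1 : Matrix (Fin k) (Fin k) ℂ) - B k).det
      = LMJ.Dd z (fun j => ((b j : ℝ) : ℂ)) k := by
    intro k
    have hM : z • (1 : Matrix (Fin k) (Fin k) ℂ) - B k
        = LMJ.tri (fun i => if i = 0 then z - ((b 0 : ℝ) : ℂ)
            else z - ((b (i-1) : ℝ) : ℂ) - ((b i : ℝ) : ℂ))
          (fun i => ((b i : ℝ) : ℂ)) (fun i => ((b i : ℝ) : ℂ)) k := by
      ext i j
      have h1 : (1 : Matrix (Fin k) (Fin k) ℂ) i j = if (i:ℕ) = (j:ℕ) then 1 else 0 := by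
        rw [Matrix.one_apply]; exact if_congr Fin.ext_iff rfl rfl
      simp only [Matrix.sub_apply, Matrix.smul_apply, h1, hB, LMJ.tri, smul_eq_mul]
      by_cases hd : (i:ℕ) = (j:ℕ)
      · rw [if_pos hd, if_pos hd, if_pos hd]
        by_cases h0 : (i:ℕ) = 0
        · rw [if_pos h0, if_pos h0]; ring
        · rw [if_neg h0, if_neg h0]; ring
      · rw [if_neg hd, if_neg hd, if_neg hd]
        by_cases hu : (i:ℕ)+1 = (j:ℕ)
        · rw [if_pos (Or.inl hu), if_pos hu,
            show min (i:ℕ) (j:ℕ) = (i:ℕ) from by omega]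
          ring
        · rw [if_neg hu]
          by_cases hl : (j:ℕ)+1 = (i:ℕ)
          · rw [if_pos (Or.inr hl), if_pos hl,
              show min (i:ℕ) (j:ℕ) = (j:ℕ) from by omega]
            ring
          · rw [if_neg (by tauto), if_neg hl]
            ring
    rw [hM, LMJ.det_tri]
    rfl
  have hprod : (∏ j ∈ Finset.Icc 1 (m+2-1), ((a (j - 1) : ℂ) - (a j : ℂ)))
      = ∏ j ∈ range (m+2-1), (((a j : ℝ) : ℂ) - ((a (j+1) : ℝ) : ℂ)) := by
    rw [← Finset.Ico_add_one_right_eq_Icc, Finset.prod_Ico_eq_prod_range]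
    apply Finset.prod_congr (by norm_num)
    intro x _
    rw [show 1 + x - 1 = x from by omega, show 1 + x = x + 1 from by omega]
  rw [LMJ.reduce (m+2) (by omega) z (fun t => ((a t : ℝ) : ℂ)) A hAcast, hFt, LMJ.Gt]
  rw [hprod, detB, detB]
end

section
/- For every n ∈ ℕ and every real ν with ν ∉ {0,−1,−2,…}, all eigenvalues of L_n(ν) are simple, i.e., L_n(ν) has n pairwise distinct eigenvalues. Moreover, if ν > 0, then L_n(ν) is positive definite, so 0 < μ_{1,n}(ν) < μ_{2,n}(ν) < … < μ_{n,n}(ν). -/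
open Filter Matrix

/-- The generalized Hilbert L-matrix `L_n(ν)` with entries `1/(max(i,j)+ν)`. -/
noncomputable def Lmat (ν : ℝ) (n : ℕ) : Matrix (Fin n) (Fin n) ℝ :=
  Matrix.of fun i j => 1 / ((max (i : ℕ) (j : ℕ) : ℝ) + ν)

theorem Lmat_isHermitian (ν : ℝ) (n : ℕ) : (Lmat ν n).IsHermitian := by
  unfold Matrix.IsHermitian
  ext i j
  simp [Lmat, Matrix.conjTranspose_apply, max_comm]

/-- The eigenvalues of `L_n(ν)` listed (with multiplicity) in nondecreasing order,
indexed by `Fin n` (so `evals ν n ⟨j-1,_⟩ = μ_{j,n}(ν)`). -/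
noncomputable def evals (ν : ℝ) (n : ℕ) : Fin n → ℝ :=
  fun j => (Lmat_isHermitian ν n).eigenvalues (Tuple.sort ((Lmat_isHermitian ν n).eigenvalues) j)

/-- `muL ν n j = μ_{j+1,n}(ν)`, the `(j+1)`-th smallest eigenvalue (0-based index `j`),
with junk value `0` when `j ≥ n`. -/
noncomputable def muL (ν : ℝ) (n : ℕ) (j : ℕ) : ℝ :=
  if h : j < n then evals ν n ⟨j, h⟩ else 0

namespace HilbertLAux

/-- `aa ν k = 1/(k+ν)`. -/
noncomputable def aa (ν : ℝ) (k : ℕ) : ℝ := 1 / ((k : ℝ) + ν)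

/-- Extension of a `Fin n`-vector to `ℕ` by zero. -/
def pad {n : ℕ} (v : Fin n → ℝ) (j : ℕ) : ℝ := if h : j < n then v ⟨j, h⟩ else 0

/-- Partial sums `T v m = v 0 + ... + v m`. -/
noncomputable def T {n : ℕ} (v : Fin n → ℝ) (m : ℕ) : ℝ :=
  ∑ j ∈ Finset.range (m + 1), pad v j

lemma hden {ν : ℝ} (hν : ∀ k : ℕ, ν ≠ -(k : ℝ)) (k : ℕ) : (k : ℝ) + ν ≠ 0 := by
  intro h; exact hν k (by linarith)

lemma aa_ne {ν : ℝ} (hν : ∀ k : ℕ, ν ≠ -(k : ℝ)) (k : ℕ) : aa ν k ≠ 0 :=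
  one_div_ne_zero (hden hν k)

lemma aa_sub {ν : ℝ} (hν : ∀ k : ℕ, ν ≠ -(k : ℝ)) (k : ℕ) :
    aa ν k - aa ν (k + 1) = 1 / (((k : ℝ) + ν) * (((k : ℝ) + 1) + ν)) := by
  have h1 := hden hν k
  have h2 := hden hν (k + 1)
  push_cast at h2 ⊢
  unfold aa
  push_cast
  field_simp
  ring

lemma aa_sub_ne {ν : ℝ} (hν : ∀ k : ℕ, ν ≠ -(k : ℝ)) (k : ℕ) :
    aa ν k - aa ν (k + 1) ≠ 0 := by
  rw [aa_sub hν k]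
  apply one_div_ne_zero
  apply mul_ne_zero (hden hν k)
  have h2 := hden hν (k + 1)
  push_cast at h2
  intro h; exact h2 (by linarith)

lemma hν_of_pos {ν : ℝ} (hν0 : 0 < ν) : ∀ k : ℕ, ν ≠ -(k : ℝ) := by
  intro k h
  have : (0 : ℝ) ≤ (k : ℝ) := Nat.cast_nonneg k
  linarith

lemma aa_pos {ν : ℝ} (hν0 : 0 < ν) (k : ℕ) : 0 < aa ν k := by
  unfold aa
  positivity

lemma aa_sub_pos {ν : ℝ} (hν0 : 0 < ν) (k : ℕ) : 0 < aa ν k - aa ν (k + 1) := by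
  rw [aa_sub (hν_of_pos hν0) k]
  have h0 : (0:ℝ) ≤ (k : ℝ) := Nat.cast_nonneg k
  positivity

lemma Lmat_apply (ν : ℝ) (n : ℕ) (i j : Fin n) :
    Lmat ν n i j = aa ν (max (i : ℕ) (j : ℕ)) := by
  simp [Lmat, aa]

lemma sum_fin_pad {n : ℕ} (F : ℕ → ℝ) (v : Fin n → ℝ) :
    (∑ j : Fin n, F (j : ℕ) * v j) = ∑ j ∈ Finset.range n, F j * pad v j := by
  rw [← Fin.sum_univ_eq_sum_range (fun j => F j * pad v j) n]
  refine Finset.sum_congr rfl fun j _ => ?_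
  simp [pad]

lemma mulVec_apply' (ν : ℝ) (n : ℕ) (v : Fin n → ℝ) (i : Fin n) :
    (Lmat ν n *ᵥ v) i = ∑ j ∈ Finset.range n, aa ν (max (i : ℕ) j) * pad v j := by
  rw [← sum_fin_pad (fun j => aa ν (max (i : ℕ) j)) v]
  simp [Matrix.mulVec, dotProduct, Lmat_apply]

lemma row_diff (ν : ℝ) {n : ℕ} (v : Fin n → ℝ) (i : ℕ) (h : i + 1 < n) :
    (Lmat ν n *ᵥ v) ⟨i, Nat.lt_of_succ_lt h⟩ - (Lmat ν n *ᵥ v) ⟨i + 1, h⟩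
      = (aa ν i - aa ν (i + 1)) * T v i := by
  rw [mulVec_apply', mulVec_apply', ← Finset.sum_sub_distrib]
  have hstep : ∀ j ∈ Finset.range n,
      aa ν (max i j) * pad v j - aa ν (max (i + 1) j) * pad v j
        = (if j ∈ Finset.range (i + 1) then (aa ν i - aa ν (i + 1)) * pad v j else 0) := by
    intro j hj
    by_cases hji : j < i + 1
    · have h1 : max i j = i := max_eq_left (Nat.lt_succ_iff.mp hji)
      have h2 : max (i + 1) j = i + 1 := max_eq_left (Nat.le_of_lt hji)
      simp [hji, h1, h2]
      ring
    · push_neg at hji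
      have h1 : max i j = j := max_eq_right (Nat.le_of_succ_le hji)
      have h2 : max (i + 1) j = j := max_eq_right hji
      simp [Finset.mem_range, not_lt.mpr hji, h1, h2]
  rw [Finset.sum_congr rfl hstep, Finset.sum_ite_mem,
    Finset.inter_eq_right.mpr (Finset.range_subset_range.mpr (Nat.le_of_lt h)),
    ← Finset.mul_sum]
  rfl

lemma row_last (ν : ℝ) {n : ℕ} (v : Fin n → ℝ) (h : 0 < n) :
    (Lmat ν n *ᵥ v) ⟨n - 1, Nat.sub_lt h Nat.one_pos⟩ = aa ν (n - 1) * T v (n - 1) := by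
  rw [mulVec_apply']
  have : ∀ j ∈ Finset.range n, aa ν (max (n - 1) j) * pad v j = aa ν (n - 1) * pad v j := by
    intro j hj
    have : j ≤ n - 1 := Nat.le_sub_one_of_lt (Finset.mem_range.mp hj)
    rw [max_eq_left this]
  rw [Finset.sum_congr rfl this, ← Finset.mul_sum]
  unfold T
  rw [Nat.sub_add_cancel h]

lemma pad_zero_of_T_zero {n : ℕ} {v : Fin n → ℝ}
    (hT : ∀ m, m < n → T v m = 0) : v = 0 := by
  have hpad : ∀ m, m < n → pad v m = 0 := by
    intro m hm
    cases m with
    | zero =>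
      have := hT 0 hm
      simpa [T, Finset.sum_range_one] using this
    | succ k =>
      have h1 := hT (k + 1) hm
      have h2 := hT k (Nat.lt_of_succ_lt hm)
      have : T v (k + 1) = T v k + pad v (k + 1) := by
        unfold T
        rw [Finset.sum_range_succ]
      rw [h1, h2] at this
      linarith
  funext i
  have := hpad i i.isLt
  simpa [pad] using this

lemma ker_triv {ν : ℝ} (hν : ∀ k : ℕ, ν ≠ -(k : ℝ)) {n : ℕ} {v : Fin n → ℝ}
    (hv : Lmat ν n *ᵥ v = 0) : v = 0 := by
  apply pad_zero_of_T_zero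
  intro m hm
  by_cases h : m + 1 < n
  · have := row_diff ν v m h
    rw [hv] at this
    simp only [Pi.zero_apply, sub_zero, zero_sub, sub_self] at this
    have h0 : (0:ℝ) = (aa ν m - aa ν (m + 1)) * T v m := by simpa using this
    have := aa_sub_ne hν m
    rcases mul_eq_zero.mp h0.symm with h' | h'
    · exact absurd h' this
    · exact h'
  · have hm1 : m = n - 1 := by omega
    have hn : 0 < n := by omega
    have := row_last ν v hn
    rw [hv] at this
    simp only [Pi.zero_apply] at this
    rcases mul_eq_zero.mp this.symm with h' | h'
    · exact absurd h' (aa_ne hν (n - 1))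
    · rw [hm1]; exact h'

lemma eig_first_zero (ν : ℝ) {μ : ℝ} (hμ : μ ≠ 0) {n : ℕ} {v : Fin n → ℝ}
    (hv : Lmat ν n *ᵥ v = μ • v) (h0 : pad v 0 = 0) : v = 0 := by
  have key : ∀ m, m < n → pad v m = 0 ∧ T v m = 0 := by
    intro m
    induction m with
    | zero =>
      intro hm
      exact ⟨h0, by simpa [T, Finset.sum_range_one] using h0⟩
    | succ k ih =>
      intro hm
      obtain ⟨hp, hT⟩ := ih (Nat.lt_of_succ_lt hm)
      have hrd := row_diff ν v k hm
      rw [hv, hT, mul_zero] at hrd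
      have e1 : (μ • v) ⟨k, Nat.lt_of_succ_lt hm⟩ = μ * pad v k := by
        simp [pad, Nat.lt_of_succ_lt hm]
      have e2 : (μ • v) ⟨k + 1, hm⟩ = μ * pad v (k + 1) := by
        simp [pad, hm]
      rw [e1, e2, hp, mul_zero, zero_sub, neg_eq_zero] at hrd
      have hp1 : pad v (k + 1) = 0 := by
        rcases mul_eq_zero.mp hrd with h' | h'
        · exact absurd h' hμ
        · exact h'
      refine ⟨hp1, ?_⟩
      unfold T
      rw [Finset.sum_range_succ]
      unfold T at hT
      rw [hT, hp1, add_zero]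
  apply pad_zero_of_T_zero
  intro m hm
  exact (key m hm).2

lemma eigenvalues_injective {n : ℕ} {ν : ℝ} (hν : ∀ k : ℕ, ν ≠ -(k : ℝ)) :
    Function.Injective (Lmat_isHermitian ν n).eigenvalues := by
  intro i j hij
  by_contra hne
  set hA := Lmat_isHermitian ν n with hAdef
  set u : Fin n → ℝ := ⇑(hA.eigenvectorBasis i) with hu_def
  set w : Fin n → ℝ := ⇑(hA.eigenvectorBasis j) with hw_def
  set μ : ℝ := hA.eigenvalues i with hμ_def
  have hu : Lmat ν n *ᵥ u = μ • u := hA.mulVec_eigenvectorBasis i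
  have hw : Lmat ν n *ᵥ w = μ • w := by
    have h := hA.mulVec_eigenvectorBasis j
    rw [← hij] at h
    exact h
  have horth : ∀ a b : Fin n,
      (inner ℝ (hA.eigenvectorBasis a) (hA.eigenvectorBasis b) : ℝ)
        = if a = b then 1 else 0 :=
    fun a b => orthonormal_iff_ite.mp hA.eigenvectorBasis.orthonormal a b
  have hinner : ∀ a b : Fin n,
      (inner ℝ (hA.eigenvectorBasis a) (hA.eigenvectorBasis b) : ℝ)
        = ∑ k : Fin n, (hA.eigenvectorBasis a) k * (hA.eigenvectorBasis b) k := by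
    intro a b
    rw [PiLp.inner_apply]
    simp [RCLike.inner_apply, mul_comm]
  have huw : ∑ k : Fin n, u k * w k = 0 := by
    have := (hinner i j).symm.trans (horth i j)
    simpa [hne] using this
  have hww : ∑ k : Fin n, w k * w k = 1 := by
    have := (hinner j j).symm.trans (horth j j)
    simpa using this
  have hn : 0 < n := i.pos
  have hune : u ≠ 0 := by
    intro h
    have := hA.eigenvectorBasis.orthonormal.ne_zero i
    apply this
    ext k
    exact congrFun h k
  have hμne : μ ≠ 0 := by
    intro h
    rw [h, zero_smul] at hu
    exact hune (ker_triv hν hu)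
  have hu0 : u ⟨0, hn⟩ ≠ 0 := by
    intro h
    apply hune
    apply eig_first_zero ν hμne hu
    simpa [HilbertLAux.pad, hn] using h
  -- consider z = w₀ • u - u₀ • w
  set z : Fin n → ℝ := w ⟨0, hn⟩ • u - u ⟨0, hn⟩ • w with hz_def
  have hz : Lmat ν n *ᵥ z = μ • z := by
    rw [hz_def, Matrix.mulVec_sub, Matrix.mulVec_smul, Matrix.mulVec_smul, hu, hw,
      smul_sub, smul_comm (w ⟨0, hn⟩) μ, smul_comm (u ⟨0, hn⟩) μ]
  have hz0 : pad z 0 = 0 := by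
    simp [HilbertLAux.pad, hn, hz_def, mul_comm]
  have hzz := eig_first_zero ν hμne hz hz0
  have hzk : ∀ k : Fin n, w ⟨0, hn⟩ * u k = u ⟨0, hn⟩ * w k := by
    intro k
    have := congrFun hzz k
    simp [hz_def] at this
    linarith
  have : u ⟨0, hn⟩ = 0 := by
    have h1 : ∑ k : Fin n, w ⟨0, hn⟩ * (u k * w k) = ∑ k : Fin n, u ⟨0, hn⟩ * (w k * w k) := by
      refine Finset.sum_congr rfl fun k _ => ?_
      rw [← mul_assoc, ← mul_assoc, hzk k]
    rw [← Finset.mul_sum, ← Finset.mul_sum, huw, hww, mul_zero, mul_one] at h1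
    exact h1.symm
  exact hu0 this

/-! ### Positive definiteness -/

/-- The telescoping coefficients. -/
noncomputable def cc (ν : ℝ) (n k : ℕ) : ℝ :=
  if k + 1 < n then aa ν k - aa ν (k + 1) else aa ν k

lemma cc_pos {ν : ℝ} (hν0 : 0 < ν) (n k : ℕ) : 0 < cc ν n k := by
  unfold cc
  split
  · exact aa_sub_pos hν0 k
  · exact aa_pos hν0 k

lemma telescope (ν : ℝ) {n : ℕ} :
    ∀ d M, M < n → n = M + d → ∑ k ∈ Finset.Ico M n, cc ν n k = aa ν M := by
  intro d
  induction d with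
  | zero => intro M hM h; omega
  | succ e ih =>
    intro M hM h
    rw [Finset.sum_eq_sum_Ico_succ_bot hM]
    cases e with
    | zero =>
      have hMn : M + 1 = n := by omega
      rw [hMn, Finset.Ico_self, Finset.sum_empty, add_zero]
      unfold cc
      rw [if_neg (by omega)]
    | succ f =>
      have hM1 : M + 1 < n := by omega
      rw [ih (M + 1) hM1 (by omega)]
      unfold cc
      rw [if_pos hM1]
      ring

/-- indicator of `i ≤ k`. -/
def ind (i k : ℕ) : ℝ := if i ≤ k then 1 else 0

lemma max_id (ν : ℝ) {n : ℕ} {i j : ℕ} (hi : i < n) (hj : j < n) :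
    aa ν (max i j) = ∑ k ∈ Finset.range n, cc ν n k * ind i k * ind j k := by
  set M := max i j with hM
  have hMn : M < n := max_lt hi hj
  have hsub : Finset.Ico M n ⊆ Finset.range n := by
    intro k hk
    simp only [Finset.mem_Ico] at hk
    exact Finset.mem_range.mpr hk.2
  have hvan : ∀ k ∈ Finset.range n, k ∉ Finset.Ico M n →
      cc ν n k * ind i k * ind j k = 0 := by
    intro k hkr hk
    have hkn : k < n := Finset.mem_range.mp hkr
    simp only [Finset.mem_Ico, not_and, not_le] at hk
    have hkM : k < M := by
      by_contra hc
      push_neg at hc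
      exact absurd hkn (hk hc)
    have : ¬ (i ≤ k) ∨ ¬ (j ≤ k) := by omega
    rcases this with h | h <;> simp [ind, h]
  rw [← Finset.sum_subset hsub hvan]
  have heq : (∑ k ∈ Finset.Ico M n, cc ν n k * ind i k * ind j k)
      = ∑ k ∈ Finset.Ico M n, cc ν n k := by
    refine Finset.sum_congr rfl fun k hk => ?_
    simp only [Finset.mem_Ico] at hk
    have h1 : i ≤ k := le_trans (le_max_left i j) hk.1
    have h2 : j ≤ k := le_trans (le_max_right i j) hk.1
    simp [ind, h1, h2]
  rw [heq, telescope ν (n - M) M hMn (by omega)]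

lemma T_eq {n : ℕ} (v : Fin n → ℝ) {k : ℕ} (hk : k < n) :
    (∑ j ∈ Finset.range n, ind j k * pad v j) = T v k := by
  unfold T
  rw [← Finset.sum_subset (Finset.range_subset_range.mpr hk)]
  · refine Finset.sum_congr rfl fun j hj => ?_
    have : j ≤ k := Nat.lt_succ_iff.mp (Finset.mem_range.mp hj)
    simp [ind, this]
  · intro j _ hj
    have : ¬ (j ≤ k) := by
      simp only [Finset.mem_range] at hj; omega
    simp [ind, this]

lemma quad_form (ν : ℝ) {n : ℕ} (x : Fin n → ℝ) :
    x ⬝ᵥ (Lmat ν n *ᵥ x) = ∑ k ∈ Finset.range n, cc ν n k * T x k * T x k := by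
  have h1 : x ⬝ᵥ (Lmat ν n *ᵥ x)
      = ∑ i ∈ Finset.range n, (∑ j ∈ Finset.range n, aa ν (max i j) * pad x j) * pad x i := by
    rw [← sum_fin_pad (fun i => ∑ j ∈ Finset.range n, aa ν (max i j) * pad x j) x]
    unfold dotProduct
    refine Finset.sum_congr rfl fun i _ => ?_
    rw [mulVec_apply']
    ring
  rw [h1]
  have h2 : ∀ i ∈ Finset.range n,
      (∑ j ∈ Finset.range n, aa ν (max i j) * pad x j) * pad x i
        = ∑ k ∈ Finset.range n,
            (∑ j ∈ Finset.range n, (cc ν n k * (ind i k * pad x i)) * (ind j k * pad x j)) := by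
    intro i hi
    rw [Finset.sum_mul, Finset.sum_comm]
    refine Finset.sum_congr rfl fun j hj => ?_
    rw [max_id ν (Finset.mem_range.mp hi) (Finset.mem_range.mp hj), Finset.sum_mul,
      Finset.sum_mul]
    refine Finset.sum_congr rfl fun k _ => ?_
    ring
  rw [Finset.sum_congr rfl h2, Finset.sum_comm]
  refine Finset.sum_congr rfl fun k hk => ?_
  have hkn : k < n := Finset.mem_range.mp hk
  have : ∀ i ∈ Finset.range n,
      (∑ j ∈ Finset.range n, (cc ν n k * (ind i k * pad x i)) * (ind j k * pad x j))
        = (cc ν n k * (ind i k * pad x i)) * T x k := by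
    intro i _
    rw [← Finset.mul_sum, T_eq x hkn]
  rw [Finset.sum_congr rfl this]
  have : ∑ i ∈ Finset.range n, (cc ν n k * (ind i k * pad x i)) * T x k
      = (cc ν n k * T x k) * ∑ i ∈ Finset.range n, ind i k * pad x i := by
    rw [Finset.mul_sum]
    refine Finset.sum_congr rfl fun i _ => ?_
    ring
  rw [this, T_eq x hkn]

lemma Lmat_posDef {ν : ℝ} (hν0 : 0 < ν) (n : ℕ) : (Lmat ν n).PosDef := by
  refine Matrix.posDef_iff_dotProduct_mulVec.mpr ⟨Lmat_isHermitian ν n, fun x hx => ?_⟩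
  have hstar : star x = x := by
    funext i; simp
  rw [hstar, quad_form ν x]
  apply Finset.sum_pos'
  · intro k _
    have h2 := cc_pos hν0 n k
    have h3 : 0 ≤ T x k * T x k := mul_self_nonneg _
    rw [mul_assoc]
    exact mul_nonneg h2.le h3
  · by_contra hcon
    push_neg at hcon
    apply hx
    apply pad_zero_of_T_zero
    intro m hm
    have h1 := hcon m (Finset.mem_range.mpr hm)
    have h2 := cc_pos hν0 n m
    by_contra hT
    have h3 : 0 < T x m * T x m := mul_self_pos.mpr hT
    have h4 : 0 < cc ν n m * T x m * T x m := by
      rw [mul_assoc]; exact mul_pos h2 h3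
    linarith

end HilbertLAux

/-- For every `n` and every real `ν ∉ {0,−1,−2,…}`, the eigenvalues of
`L_n(ν)` are simple (the nondecreasing listing of eigenvalues is injective, i.e. the `n`
eigenvalues are pairwise distinct). Moreover, if `ν > 0` then `L_n(ν)` is positive definite
and `0 < μ_{1,n}(ν) < μ_{2,n}(ν) < … < μ_{n,n}(ν)`. -/
theorem hilbert_L_matrix_eigenvalues_simple
    (n : ℕ) (ν : ℝ) (hν : ∀ k : ℕ, ν ≠ -(k : ℝ)) :
    Function.Injective (evals ν n) ∧
      (0 < ν → (Lmat ν n).PosDef ∧ StrictMono (evals ν n) ∧ ∀ j : Fin n, 0 < evals ν n j) := by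
  have hinj0 : Function.Injective (Lmat_isHermitian ν n).eigenvalues :=
    HilbertLAux.eigenvalues_injective hν
  have hinj : Function.Injective (evals ν n) := by
    intro a b h
    exact (Equiv.injective _) (hinj0 h)
  refine ⟨hinj, fun hν0 => ?_⟩
  have hpd := HilbertLAux.Lmat_posDef hν0 n
  refine ⟨hpd, ?_, ?_⟩
  · have hmono : Monotone (evals ν n) := by
      have := Tuple.monotone_sort ((Lmat_isHermitian ν n).eigenvalues)
      intro a b hab
      exact this hab
    exact hmono.strictMono_of_injective hinj
  · intro j
    exact hpd.eigenvalues_pos _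
end

section
/- Define p_n(z) := det(I − z L_n) for n ∈ ℕ and z ∈ ℂ. Then for every integer n ≥ 2 and every z ∈ ℂ, the three-term recurrence (n+1)² p_{n+1}(z) + ( z − 2n² − 2n − 1 ) p_n(z) + n² p_{n−1}(z) = 0 holds. -/
/-- The Hilbert L-matrix `L_n = L_n(1)` as a complex matrix, entries `1/(max(i,j)+1)`. -/
noncomputable def LmatC (n : ℕ) : Matrix (Fin n) (Fin n) ℂ :=
  Matrix.of fun i j => 1 / (((max (i : ℕ) (j : ℕ) : ℕ) : ℂ) + 1)

/-- `p_n(z) := det(1 − z L_n)`. -/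
noncomputable def pChar (n : ℕ) (z : ℂ) : ℂ := (1 - z • LmatC n).det

/-- Tridiagonal matrix `E`: diag `2(k+1)^2 - z`, off-diag `-(k+1)(k+2)`. -/
noncomputable def Em (z : ℂ) (n : ℕ) : Matrix (Fin n) (Fin n) ℂ :=
  Matrix.of fun i j =>
    if (i:ℕ) = (j:ℕ) then 2*(((i:ℕ):ℂ)+1)^2 - z
    else if (i:ℕ)+1 = (j:ℕ) then -((((i:ℕ):ℂ)+1)*(((i:ℕ):ℂ)+2))
    else if (j:ℕ)+1 = (i:ℕ) then -((((j:ℕ):ℂ)+1)*(((j:ℕ):ℂ)+2))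
    else 0

/-- `E` with the last diagonal entry replaced by `n^2 - z`; this is `L_n⁻¹ - z`. -/
noncomputable def Mm (z : ℂ) (n : ℕ) : Matrix (Fin n) (Fin n) ℂ :=
  Matrix.of fun i j =>
    if (i:ℕ) = (j:ℕ) then (if (i:ℕ)+1 = n then ((n:ℕ):ℂ)^2 - z else 2*(((i:ℕ):ℂ)+1)^2 - z)
    else if (i:ℕ)+1 = (j:ℕ) then -((((i:ℕ):ℂ)+1)*(((i:ℕ):ℂ)+2))
    else if (j:ℕ)+1 = (i:ℕ) then -((((j:ℕ):ℂ)+1)*(((j:ℕ):ℂ)+2))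
    else 0

open Matrix Fin in
lemma det_expand {n : ℕ} (A : Matrix (Fin (n+2)) (Fin (n+2)) ℂ)
    (B : Matrix (Fin (n+1)) (Fin (n+1)) ℂ) (C : Matrix (Fin n) (Fin n) ℂ) (a b : ℂ)
    (hrow : ∀ j : Fin (n+2), (j:ℕ) < n → A (Fin.last _) j = 0)
    (hcol : ∀ i : Fin (n+2), (i:ℕ) < n → A i (Fin.last _) = 0)
    (hb : A (Fin.last _) ((Fin.last n).castSucc) = b)
    (hb' : A ((Fin.last n).castSucc) (Fin.last _) = b)
    (ha : A (Fin.last _) (Fin.last _) = a)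
    (hB : ∀ i j : Fin (n+1), B i j = A i.castSucc j.castSucc)
    (hC : ∀ i j : Fin n, C i j = A i.castSucc.castSucc j.castSucc.castSucc) :
    A.det = a * B.det - b^2 * C.det := by
  have hs1 : ((-1:ℂ)) ^ (((Fin.last (n+1) : Fin (n+2)) : ℕ) + ((Fin.last (n+1) : Fin (n+2)) : ℕ)) = 1 := by
    rw [Fin.val_last, ← two_mul, pow_mul]; norm_num
  have hs2 : ((-1:ℂ)) ^ (((Fin.last (n+1) : Fin (n+2)) : ℕ) + (((Fin.last n).castSucc : Fin (n+2)) : ℕ)) = -1 := by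
    rw [Fin.val_last, Fin.coe_castSucc, Fin.val_last, show n+1+n = 2*n+1 by ring, pow_succ, pow_mul]
    norm_num
  have hσlast : ((Fin.last n).castSucc).succAbove (Fin.last n) = Fin.last (n+1) := by
    rw [Fin.succAbove_castSucc_of_le _ _ le_rfl, Fin.succ_last]
  have hσcs : ∀ j : Fin n, ((Fin.last n).castSucc).succAbove j.castSucc = j.castSucc.castSucc :=
    fun j => Fin.succAbove_castSucc_of_lt _ _ (Fin.castSucc_lt_last j)
  have hBdet : A.submatrix (Fin.last (n+1)).succAbove (Fin.last (n+1)).succAbove = B := by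
    ext i j; rw [hB]; simp [Fin.succAbove_last]
  have hM2 : (A.submatrix (Fin.last (n+1)).succAbove ((Fin.last n).castSucc).succAbove).det
      = b * C.det := by
    rw [Fin.succAbove_last, Matrix.det_succ_column _ (Fin.last n), Fin.sum_univ_castSucc]
    have hz : ∀ i : Fin n, (-1:ℂ) ^ (((i.castSucc : Fin (n+1)) : ℕ) + ((Fin.last n : Fin (n+1)) : ℕ)) *
        (A.submatrix Fin.castSucc ((Fin.last n).castSucc).succAbove) i.castSucc (Fin.last n) *
        ((A.submatrix Fin.castSucc ((Fin.last n).castSucc).succAbove).submatrix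
          i.castSucc.succAbove (Fin.last n).succAbove).det = 0 := by
      intro i
      rw [Matrix.submatrix_apply, hσlast, hcol _ (by simp)]
      ring
    simp only [hz, Finset.sum_const_zero, zero_add]
    rw [Matrix.submatrix_apply, hσlast, hb']
    have hmin : (A.submatrix Fin.castSucc ((Fin.last n).castSucc).succAbove).submatrix
        (Fin.last n).succAbove (Fin.last n).succAbove = C := by
      ext i j
      simp only [Fin.succAbove_last, Matrix.submatrix_apply, hσcs]
      exact (hC i j).symm
    rw [hmin, Fin.val_last, ← two_mul, pow_mul]
    norm_num
  rw [Matrix.det_succ_row A (Fin.last _), Fin.sum_univ_castSucc, Fin.sum_univ_castSucc]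
  have hz2 : ∀ j : Fin n, (-1:ℂ) ^ (((Fin.last (n+1) : Fin (n+2)) : ℕ) + ((j.castSucc.castSucc : Fin (n+2)) : ℕ)) *
      A (Fin.last _) j.castSucc.castSucc *
      (A.submatrix (Fin.last (n+1)).succAbove (j.castSucc.castSucc).succAbove).det = 0 := by
    intro j
    rw [hrow _ (by simp)]
    ring
  simp only [hz2, Finset.sum_const_zero, zero_add]
  rw [hs1, hs2, ha, hb, hBdet, hM2]
  ring

lemma Em_rec (z : ℂ) (n : ℕ) :
    (Em z (n+2)).det = (2*((n:ℂ)+2)^2 - z) * (Em z (n+1)).det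
      - (((n:ℂ)+1)*((n:ℂ)+2))^2 * (Em z n).det := by
  have h := det_expand (Em z (n+2)) (Em z (n+1)) (Em z n)
      (2*((n:ℂ)+2)^2 - z) (-(((n:ℂ)+1)*((n:ℂ)+2)))
      ?_ ?_ ?_ ?_ ?_ ?_ ?_
  · rw [h]; ring
  · intro j hj
    simp only [Em, Matrix.of_apply, Fin.val_last]
    split_ifs <;> first | rfl | (exfalso; omega)
  · intro i hi
    simp only [Em, Matrix.of_apply, Fin.val_last]
    split_ifs <;> first | rfl | (exfalso; omega)
  · simp only [Em, Matrix.of_apply, Fin.val_last, Fin.coe_castSucc]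
    split_ifs <;> first | (exfalso; omega) | (push_cast; ring)
  · simp only [Em, Matrix.of_apply, Fin.val_last, Fin.coe_castSucc]
    split_ifs <;> first | (exfalso; omega) | (push_cast; ring)
  · simp only [Em, Matrix.of_apply, Fin.val_last]
    split_ifs <;> first | (exfalso; omega) | (push_cast; ring)
  · intro i j
    simp only [Em, Matrix.of_apply, Fin.coe_castSucc]
  · intro i j
    simp only [Em, Matrix.of_apply, Fin.coe_castSucc]

lemma Mm_rec (z : ℂ) (n : ℕ) :
    (Mm z (n+2)).det = (((n:ℂ)+2)^2 - z) * (Em z (n+1)).det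
      - (((n:ℂ)+1)*((n:ℂ)+2))^2 * (Em z n).det := by
  have h := det_expand (Mm z (n+2)) (Em z (n+1)) (Em z n)
      (((n:ℂ)+2)^2 - z) (-(((n:ℂ)+1)*((n:ℂ)+2)))
      ?_ ?_ ?_ ?_ ?_ ?_ ?_
  · rw [h]; ring
  · intro j hj
    simp only [Mm, Matrix.of_apply, Fin.val_last]
    split_ifs <;> first | rfl | (exfalso; omega)
  · intro i hi
    simp only [Mm, Matrix.of_apply, Fin.val_last]
    split_ifs <;> first | rfl | (exfalso; omega)
  · simp only [Mm, Matrix.of_apply, Fin.val_last, Fin.coe_castSucc]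
    split_ifs <;> first | (exfalso; omega) | (push_cast; ring)
  · simp only [Mm, Matrix.of_apply, Fin.val_last, Fin.coe_castSucc]
    split_ifs <;> first | (exfalso; omega) | (push_cast; ring)
  · simp only [Mm, Matrix.of_apply, Fin.val_last]
    split_ifs <;> first | (exfalso; omega) | (push_cast; ring)
  · intro i j
    have hi := i.isLt
    simp only [Em, Mm, Matrix.of_apply, Fin.coe_castSucc]
    split_ifs <;> first | rfl | (exfalso; omega)
  · intro i j
    have hi := i.isLt
    simp only [Em, Mm, Matrix.of_apply, Fin.coe_castSucc]
    split_ifs <;> first | rfl | (exfalso; omega)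

lemma Em_zero (z : ℂ) : (Em z 0).det = 1 := Matrix.det_fin_zero

lemma Em_one (z : ℂ) : (Em z 1).det = 2 - z := by
  rw [Matrix.det_fin_one]
  simp [Em]

lemma Mm_one (z : ℂ) : (Mm z 1).det = 1 - z := by
  rw [Matrix.det_fin_one]
  simp [Mm]

/-- `E_{n+1} = D_{n+1} + (n+1)^2 E_n`. -/
lemma ED (z : ℂ) (n : ℕ) :
    (Em z (n+1)).det = (Mm z (n+1)).det + ((n:ℂ)+1)^2 * (Em z n).det := by
  cases n with
  | zero => rw [Em_one, Mm_one, Em_zero]; ring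
  | succ m =>
    have h1 := Em_rec z m
    have h2 := Mm_rec z m
    push_cast at *
    linear_combination h1 - h2

/-- Main three-term recurrence for `D_n = det (Mm z n)`, `n = m+2`. -/
lemma Mm_rec3 (z : ℂ) (m : ℕ) :
    (Mm z (m+3)).det + (z - 2*((m:ℂ)+2)^2 - 2*((m:ℂ)+2) - 1) * (Mm z (m+2)).det
      + ((m:ℂ)+2)^4 * (Mm z (m+1)).det = 0 := by
  have h1 := Mm_rec z (m+1)
  have h2 := Mm_rec z m
  have h3 := ED z (m+1)
  have h4 := ED z m
  push_cast at *
  linear_combination h1 + (((m:ℂ)+3)^2 - z) * h3 - ((m:ℂ)+2)^2 * h2 - ((m:ℂ)+2)^4 * h4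

lemma Em_det_zero : ∀ n : ℕ, (Em 0 n).det = ((n:ℂ)+1) * ((n.factorial : ℂ))^2 := by
  intro n
  induction n using Nat.twoStepInduction with
  | zero => simpa using Em_zero 0
  | one => rw [Em_one]; simp [Nat.factorial]; ring
  | more n ih1 ih2 =>
    rw [Em_rec 0 n, ih1, ih2]
    simp only [Nat.factorial_succ]
    push_cast
    ring

lemma Mm_det_zero (n : ℕ) : (Mm 0 n).det = ((n.factorial : ℂ))^2 := by
  match n with
  | 0 => simp [Matrix.det_fin_zero]
  | 1 => rw [Mm_one]; simp [Nat.factorial]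
  | (m+2) =>
    rw [Mm_rec 0 m, Em_det_zero, Em_det_zero]
    simp only [Nat.factorial_succ]
    push_cast
    ring

lemma LmatC_mul_Mm (n : ℕ) : LmatC n * Mm 0 n = 1 := by
  ext i j
  rw [Matrix.mul_apply, Matrix.one_apply]
  have hiLt := i.isLt
  have hjLt := j.isLt
  by_cases hJ0 : (j:ℕ) = 0
  · by_cases hJn : (j:ℕ) + 1 = n
    · -- n = 1, i = j = 0
      have hT : ∀ k : Fin n, Mm 0 n k j = (if k = j then ((n:ℕ):ℂ)^2 else 0) := by
        intro k
        have hkLt := k.isLt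
        simp only [Mm, Matrix.of_apply, Fin.ext_iff]
        split_ifs <;> first | (exfalso; omega) | (push_cast; ring1)
      simp only [hT, mul_ite, mul_zero, Finset.sum_ite_eq', Finset.mem_univ, if_true]
      have hij : i = j := Fin.ext (by omega)
      rw [if_pos hij]
      simp only [LmatC, Matrix.of_apply]
      have h1 : max (i:ℕ) (j:ℕ) = 0 := by omega
      have hn : ((n:ℕ):ℂ) = 1 := by rw [← hJn, hJ0]; norm_num
      rw [h1, hn]
      norm_num
    · -- j = 0, n ≥ 2 : two terms
      have hT : ∀ k : Fin n, Mm 0 n k j =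
          (if k = j then 2 else 0) + (if k = (⟨1, by omega⟩ : Fin n) then -2 else 0) := by
        intro k
        have hkLt := k.isLt
        simp only [Mm, Matrix.of_apply, Fin.ext_iff, Fin.val_mk]
        split_ifs <;> first | (exfalso; omega) | (simp_all; done) | (simp_all; push_cast; ring1)
      simp only [hT, mul_add, mul_ite, mul_zero, Finset.sum_add_distrib, Finset.sum_ite_eq',
        Finset.mem_univ, if_true]
      simp only [LmatC, Matrix.of_apply, Fin.val_mk]
      rcases Nat.eq_zero_or_pos (i:ℕ) with hI | hI
      · have hij : i = j := Fin.ext (by omega)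
        rw [if_pos hij]
        have h1 : max (i:ℕ) (j:ℕ) = 0 := by omega
        have h2 : max (i:ℕ) 1 = 1 := by omega
        rw [h1, h2]
        norm_num
      · have hij : ¬ i = j := fun h => by rw [Fin.ext_iff] at h; omega
        rw [if_neg hij]
        have h1 : max (i:ℕ) (j:ℕ) = (i:ℕ) := by omega
        have h2 : max (i:ℕ) 1 = (i:ℕ) := by omega
        rw [h1, h2]
        ring
  · set J' := (j:ℕ) - 1 with hJ'def
    have hJ' : (j:ℕ) = J' + 1 := by omega
    have hxne : ∀ m : ℕ, ((m:ℂ)+1) ≠ 0 := fun m => Nat.cast_add_one_ne_zero m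
    have hcj : ((j:ℕ):ℂ) = (J':ℂ) + 1 := by rw [hJ']; push_cast; ring
    have d1 : ((J':ℂ)+1) ≠ 0 := hxne _
    have d2 : ((J':ℂ)+1+1) ≠ 0 := by have := hxne (J'+1); push_cast at this; exact this
    have d3 : ((J':ℂ)+2+1) ≠ 0 := by have := hxne (J'+2); push_cast at this; exact this
    have d4 : (((i:ℕ):ℂ)+1) ≠ 0 := hxne _
    by_cases hJn : (j:ℕ) + 1 = n
    · -- last column, two terms: k = j (n²), k = J' (-(J'+1)(J'+2))
      have hT : ∀ k : Fin n, Mm 0 n k j =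
          (if k = j then ((n:ℕ):ℂ)^2 else 0)
          + (if k = (⟨J', by omega⟩ : Fin n) then -(((J':ℂ)+1)*((J':ℂ)+2)) else 0) := by
        intro k
        have hkLt := k.isLt
        simp only [Mm, Matrix.of_apply, Fin.ext_iff, Fin.val_mk]
        split_ifs <;>
          first
          | (exfalso; omega)
          | (push_cast; ring1)
          | (rename_i hk _; rw [show (k:ℕ) = J' from by omega]; push_cast; ring1)
          | (rename_i hk; rw [show (k:ℕ) = J' from by omega]; push_cast; ring1)
      simp only [hT, mul_add, mul_ite, mul_zero, Finset.sum_add_distrib, Finset.sum_ite_eq',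
        Finset.mem_univ, if_true]
      simp only [LmatC, Matrix.of_apply, Fin.val_mk]
      have hn : ((n:ℕ):ℂ) = (J':ℂ) + 2 := by rw [← hJn, hJ']; push_cast; ring
      rcases eq_or_ne (i:ℕ) (j:ℕ) with hI | hI
      · have hij : i = j := Fin.ext hI
        rw [if_pos hij]
        have h1 : max (i:ℕ) (j:ℕ) = J' + 1 := by omega
        have h2 : max (i:ℕ) J' = J' + 1 := by omega
        rw [h1, h2, hn]
        push_cast
        field_simp [d1, d2, d3, d4]
        ring
      · -- i < j
        have hIlt : (i:ℕ) < (j:ℕ) := by omega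
        have hij : ¬ i = j := fun h => hI (by rw [h])
        rw [if_neg hij]
        have h1 : max (i:ℕ) (j:ℕ) = J' + 1 := by omega
        have h2 : max (i:ℕ) J' = J' := by omega
        rw [h1, h2, hn]
        push_cast
        field_simp [d1, d2, d3, d4]
        ring
    · -- interior column with J ≥ 1 : three terms
      have hT : ∀ k : Fin n, Mm 0 n k j =
          (if k = j then 2*((J':ℂ)+2)^2 else 0)
          + (if k = (⟨J', by omega⟩ : Fin n) then -(((J':ℂ)+1)*((J':ℂ)+2)) else 0)
          + (if k = (⟨(j:ℕ)+1, by omega⟩ : Fin n) then -(((J':ℂ)+2)*((J':ℂ)+3)) else 0) := by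
        intro k
        have hkLt := k.isLt
        simp only [Mm, Matrix.of_apply, Fin.ext_iff, Fin.val_mk]
        split_ifs <;>
          first
          | (exfalso; omega)
          | (rw [show (k:ℕ) = J' + 1 from by omega]; push_cast; ring1)
          | (rw [show (k:ℕ) = J' from by omega]; push_cast; ring1)
          | (rw [show ((j:ℕ):ℂ) = (J':ℂ)+1 from hcj]; push_cast; ring1)
          | (push_cast; ring1)
      simp only [hT, mul_add, mul_ite, mul_zero, Finset.sum_add_distrib, Finset.sum_ite_eq',
        Finset.mem_univ, if_true]
      simp only [LmatC, Matrix.of_apply, Fin.val_mk]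
      rcases lt_trichotomy (i:ℕ) (j:ℕ) with hI | hI | hI
      · have hij : ¬ i = j := fun h => by rw [Fin.ext_iff] at h; omega
        rw [if_neg hij]
        have h1 : max (i:ℕ) (j:ℕ) = J' + 1 := by omega
        have h2 : max (i:ℕ) J' = J' := by omega
        have h3 : max (i:ℕ) ((j:ℕ)+1) = J' + 2 := by omega
        rw [h1, h2, h3]
        push_cast
        field_simp [d1, d2, d3, d4]
        ring
      · have hij : i = j := Fin.ext hI
        rw [if_pos hij]
        have h1 : max (i:ℕ) (j:ℕ) = J' + 1 := by omega
        have h2 : max (i:ℕ) J' = J' + 1 := by omega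
        have h3 : max (i:ℕ) ((j:ℕ)+1) = J' + 2 := by omega
        rw [h1, h2, h3]
        push_cast
        field_simp [d1, d2, d3, d4]
        ring
      · have hij : ¬ i = j := fun h => by rw [Fin.ext_iff] at h; omega
        rw [if_neg hij]
        rcases eq_or_ne (i:ℕ) ((j:ℕ)+1) with hI2 | hI2
        · have h1 : max (i:ℕ) (j:ℕ) = J' + 2 := by omega
          have h2 : max (i:ℕ) J' = J' + 2 := by omega
          have h3 : max (i:ℕ) ((j:ℕ)+1) = J' + 2 := by omega
          rw [h1, h2, h3]
          push_cast
          field_simp [d1, d2, d3, d4]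
          ring
        · have h1 : max (i:ℕ) (j:ℕ) = (i:ℕ) := by omega
          have h2 : max (i:ℕ) J' = (i:ℕ) := by omega
          have h3 : max (i:ℕ) ((j:ℕ)+1) = (i:ℕ) := by omega
          rw [h1, h2, h3]
          push_cast
          field_simp [d1, d2, d3, d4]
          ring

lemma pChar_eq (n : ℕ) (z : ℂ) :
    pChar n z * ((n.factorial : ℂ))^2 = (Mm z n).det := by
  have h1 : (1 - z • LmatC n) * Mm 0 n = Mm z n := by
    rw [Matrix.sub_mul, Matrix.one_mul, Matrix.smul_mul, LmatC_mul_Mm]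
    ext i j
    simp only [Mm, Matrix.sub_apply, Matrix.smul_apply, Matrix.one_apply, Matrix.of_apply,
      smul_eq_mul, Fin.ext_iff]
    split_ifs <;> first | (exfalso; omega) | ring
  rw [pChar, ← Mm_det_zero n, ← Matrix.det_mul, h1]

/-- For every `n ≥ 2` and `z ∈ ℂ`, the polynomials `p_n(z) = det(1 − z L_n)`
satisfy the three-term recurrence
`(n+1)² p_{n+1}(z) + (z − 2n² − 2n − 1) p_n(z) + n² p_{n−1}(z) = 0`. -/
theorem hilbert_L_matrix_charpoly_recurrence (n : ℕ) (hn : 2 ≤ n) (z : ℂ) :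
    ((n : ℂ) + 1) ^ 2 * pChar (n + 1) z
      + (z - 2 * (n : ℂ) ^ 2 - 2 * (n : ℂ) - 1) * pChar n z
      + (n : ℂ) ^ 2 * pChar (n - 1) z = 0 := by
  obtain ⟨m, rfl⟩ : ∃ m, n = m + 2 := ⟨n - 2, by omega⟩
  have h23 : m + 2 + 1 = m + 3 := by omega
  have h21 : m + 2 - 1 = m + 1 := by omega
  rw [h23, h21]
  have e1 := pChar_eq (m+1) z
  have e2 := pChar_eq (m+2) z
  have e3 := pChar_eq (m+3) z
  have R := Mm_rec3 z m
  have hf : (((m+2).factorial : ℂ))^2 ≠ 0 :=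
    pow_ne_zero _ (Nat.cast_ne_zero.mpr (Nat.factorial_ne_zero _))
  have key : (((m+2 : ℕ) : ℂ) + 1) ^ 2 * pChar (m + 3) z
      + (z - 2 * ((m+2 : ℕ) : ℂ) ^ 2 - 2 * ((m+2 : ℕ) : ℂ) - 1) * pChar (m + 2) z
      + ((m+2 : ℕ) : ℂ) ^ 2 * pChar (m + 1) z = 0 ∨ (((m+2).factorial : ℂ))^2 = 0 := by
    rw [← mul_eq_zero]
    simp only [Nat.factorial_succ] at e1 e2 e3 ⊢
    push_cast at e1 e2 e3 R ⊢
    linear_combination e3 + (z - 2*((m:ℂ)+2)^2 - 2*((m:ℂ)+2) - 1) * e2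
      + ((m:ℂ)+2)^4 * e1 + R
  exact key.resolve_right hf
end

section
/- Let ν > 0 and n ≥ 2. Let B_m(ν) be the m×m symmetric tridiagonal Jacobi matrix built from b_j := (j+ν)(j+1+ν), i.e., with diagonal entries (B_m(ν))_{0,0} = b_0, (B_m(ν))_{j,j} = b_{j−1}+b_j for 1 ≤ j ≤ m−1, and off-diagonal entries (B_m(ν))_{j,j+1} = (B_m(ν))_{j+1,j} = −b_j for 0 ≤ j ≤ m−2, and denote its eigenvalues in nondecreasing order by β_{1,m}(ν) ≤ … ≤ β_{m,m}(ν). Then all β_{k,m}(ν) are positive, and for every j ∈ {1,…,n−1}, 1/β_{n−j+1,n}(ν) ≤ μ_{j,n}(ν) ≤ 1/β_{n−j,n−1}(ν). -/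
open Filter Matrix

/-- The `m×m` symmetric tridiagonal Jacobi matrix with diagonal
`(b_0, b_0+b_1, …, b_{m−2}+b_{m−1})` and sub/superdiagonal entries `−b_0, …, −b_{m−2}`. -/
noncomputable def jacobiMat (b : ℕ → ℝ) (m : ℕ) : Matrix (Fin m) (Fin m) ℝ :=
  Matrix.of fun i j =>
    if (i : ℕ) = (j : ℕ) then
      (if (i : ℕ) = 0 then b 0 else b ((i : ℕ) - 1) + b (i : ℕ))
    else if (i : ℕ) + 1 = (j : ℕ) ∨ (j : ℕ) + 1 = (i : ℕ) then
      -(b (min (i : ℕ) (j : ℕ)))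
    else 0

theorem jacobiMat_isHermitian (b : ℕ → ℝ) (m : ℕ) : (jacobiMat b m).IsHermitian := by
  unfold Matrix.IsHermitian
  ext i j
  simp only [jacobiMat, Matrix.conjTranspose_apply, Matrix.of_apply, star_trivial]
  by_cases h : (i : ℕ) = (j : ℕ)
  · simp [h]
  · simp [h, Ne.symm h, or_comm, min_comm]

/-- Sorted (nondecreasing) eigenvalue listing of the Jacobi matrix `B_m(ν)` built from
`b_j = (j+ν)(j+1+ν)`; `betaL ν m k = β_{k+1,m}(ν)` (0-based `k`), junk `0` if `k ≥ m`. -/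
noncomputable def betaL (ν : ℝ) (m : ℕ) (k : ℕ) : ℝ :=
  if h : k < m then
    (jacobiMat_isHermitian (fun j => ((j : ℝ) + ν) * ((j : ℝ) + 1 + ν)) m).eigenvalues
      (Tuple.sort
        ((jacobiMat_isHermitian (fun j => ((j : ℝ) + ν) * ((j : ℝ) + 1 + ν)) m).eigenvalues)
        ⟨k, h⟩)
  else 0


open Matrix Finset Submodule

local notation "⟪" x ", " y "⟫" => inner (𝕜 := ℝ) x y

section Machinery
variable {N : ℕ}

lemma inner_eq_dot (x y : EuclideanSpace ℝ (Fin N)) : ⟪x, y⟫ = x ⬝ᵥ y := by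
  simp [PiLp.inner_apply, dotProduct, RCLike.inner_apply, mul_comm]

lemma norm_sq_eq_dot (x : EuclideanSpace ℝ (Fin N)) : ‖x‖^2 = x ⬝ᵥ x := by
  rw [← real_inner_self_eq_norm_sq, inner_eq_dot]

-- intersection lemma
lemma exists_ne_zero_mem_inf {S T : Submodule ℝ (EuclideanSpace ℝ (Fin N))}
    (h : N < Module.finrank ℝ S + Module.finrank ℝ T) :
    ∃ x : EuclideanSpace ℝ (Fin N), x ≠ 0 ∧ x ∈ S ∧ x ∈ T := by
  have h1 := Submodule.finrank_sup_add_finrank_inf_eq S T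
  have h2 : Module.finrank ℝ ↥(S ⊔ T) ≤ N := by
    simpa [finrank_euclideanSpace] using Submodule.finrank_le (S ⊔ T)
  have h3 : 0 < Module.finrank ℝ ↥(S ⊓ T) := by omega
  obtain ⟨⟨x, hx⟩, hx0⟩ := Module.finrank_pos_iff_exists_ne_zero.mp h3
  exact ⟨x, by simpa [Submodule.mk_eq_zero] using hx0, (Submodule.mem_inf.mp hx).1,
    (Submodule.mem_inf.mp hx).2⟩
end Machinery


section Quad
variable {N : ℕ} (u : OrthonormalBasis (Fin N) ℝ (EuclideanSpace ℝ (Fin N)))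
  (M : Matrix (Fin N) (Fin N) ℝ) (d : Fin N → ℝ)

lemma inner_repr (x y : EuclideanSpace ℝ (Fin N)) :
    ⟪x, y⟫ = ∑ i, u.repr x i * u.repr y i := by
  rw [← LinearIsometryEquiv.inner_map_map u.repr x y, inner_eq_dot]
  rfl

lemma dot_self_repr (x : EuclideanSpace ℝ (Fin N)) :
    x ⬝ᵥ x = ∑ i, (u.repr x i)^2 := by
  rw [← inner_eq_dot, inner_repr u]
  exact Finset.sum_congr rfl fun i _ => (sq _).symm

lemma mulVec_expand (hM : ∀ i, M *ᵥ ⇑(u i) = d i • ⇑(u i)) (x : EuclideanSpace ℝ (Fin N)) :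
    (WithLp.toLp 2 (M *ᵥ x) : EuclideanSpace ℝ (Fin N)) = ∑ j, (u.repr x j * d j) • u j := by
  have hx : x = ∑ j, u.repr x j • u j := (u.sum_repr x).symm
  have h0 : (WithLp.toLp 2 (M *ᵥ x) : EuclideanSpace ℝ (Fin N)) = Matrix.toEuclideanLin M x := rfl
  rw [h0]
  conv_lhs => rw [hx]
  rw [map_sum]
  refine Finset.sum_congr rfl fun j _ => ?_
  rw [LinearMap.map_smul]
  have h1 : M.mulVecLin (u j) = (M *ᵥ ⇑(u j) : Fin N → ℝ) := rfl
  have h2 : M.mulVecLin (u j) = ((d j • ⇑(u j) : Fin N → ℝ)) := by rw [h1, hM j]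
  have h3 : Matrix.toEuclideanLin M (u j) = (d j • (u j) : EuclideanSpace ℝ (Fin N)) := by
    rw [Matrix.toEuclideanLin_apply, hM j]; rfl
  rw [h3, smul_smul]

lemma quad_repr (hM : ∀ i, M *ᵥ ⇑(u i) = d i • ⇑(u i)) (x : EuclideanSpace ℝ (Fin N)) :
    x ⬝ᵥ (M *ᵥ x) = ∑ i, d i * (u.repr x i)^2 := by
  have h0 : x ⬝ᵥ (M *ᵥ x) = ⟪x, (WithLp.toLp 2 (M *ᵥ x) : EuclideanSpace ℝ (Fin N))⟫ :=
    (inner_eq_dot x (WithLp.toLp 2 (M *ᵥ x))).symm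
  rw [h0, mulVec_expand u M d hM x, inner_sum]
  refine Finset.sum_congr rfl fun i _ => ?_
  rw [real_inner_smul_right, real_inner_comm, ← u.repr_apply_apply]
  ring

lemma repr_support {t : Finset (Fin N)} {x : EuclideanSpace ℝ (Fin N)}
    (hx : x ∈ span ℝ (⇑u '' ↑t)) : ∀ i ∉ t, u.repr x i = 0 := by
  intro i hi
  have hx' : x ∈ span ℝ (⇑u.toBasis '' ↑t) := by rwa [u.coe_toBasis]
  have hsupp := (Module.Basis.mem_span_image u.toBasis).mp hx'
  by_contra h
  exact hi (hsupp (by simp [Finsupp.mem_support_iff, u.coe_toBasis_repr_apply, h]))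

lemma finrank_span_ob (t : Finset (Fin N)) :
    Module.finrank ℝ (span ℝ (⇑u '' ↑t)) = t.card := by
  have h : (⇑u '' ↑t) = Set.range (fun i : t => u ↑i) := by
    ext y; simp [Set.range, Set.mem_image]
  have li : LinearIndependent ℝ (fun i : t => u ↑i) :=
    (u.orthonormal.comp (fun i : t => (i : Fin N)) Subtype.val_injective).linearIndependent
  rw [h, finrank_span_eq_card li, Fintype.card_coe]

/-- certificate bound: on the span of eigenvectors indexed by `t`, if all `d i ≤ c`
then the quadratic form is `≤ c * ‖x‖²` (dot form). -/
lemma quad_le_on_span (hM : ∀ i, M *ᵥ ⇑(u i) = d i • ⇑(u i)) {t : Finset (Fin N)} {c : ℝ}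
    (hd : ∀ i ∈ t, d i ≤ c) {x : EuclideanSpace ℝ (Fin N)} (hx : x ∈ span ℝ (⇑u '' ↑t)) :
    x ⬝ᵥ (M *ᵥ x) ≤ c * (x ⬝ᵥ x) := by
  rw [quad_repr u M d hM x, dot_self_repr u x, Finset.mul_sum]
  refine Finset.sum_le_sum fun i _ => ?_
  by_cases hi : i ∈ t
  · exact mul_le_mul_of_nonneg_right (hd i hi) (sq_nonneg _)
  · simp [repr_support u hx i hi]

lemma quad_ge_on_span (hM : ∀ i, M *ᵥ ⇑(u i) = d i • ⇑(u i)) {t : Finset (Fin N)} {c : ℝ}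
    (hd : ∀ i ∈ t, c ≤ d i) {x : EuclideanSpace ℝ (Fin N)} (hx : x ∈ span ℝ (⇑u '' ↑t)) :
    c * (x ⬝ᵥ x) ≤ x ⬝ᵥ (M *ᵥ x) := by
  rw [quad_repr u M d hM x, dot_self_repr u x, Finset.mul_sum]
  refine Finset.sum_le_sum fun i _ => ?_
  by_cases hi : i ∈ t
  · exact mul_le_mul_of_nonneg_right (hd i hi) (sq_nonneg _)
  · simp [repr_support u hx i hi]

end Quad

section Sorted
variable {N : ℕ} {M : Matrix (Fin N) (Fin N) ℝ}

/-- sorted eigenvalues -/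
noncomputable def sEig (hM : M.IsHermitian) (k : Fin N) : ℝ :=
  hM.eigenvalues (Tuple.sort hM.eigenvalues k)

lemma sEig_monotone (hM : M.IsHermitian) : Monotone (sEig hM) :=
  Tuple.monotone_sort hM.eigenvalues

lemma sEig_le_of_subspace (hM : M.IsHermitian) (k : Fin N)
    (S : Submodule ℝ (EuclideanSpace ℝ (Fin N)))
    (hdim : (k : ℕ) + 1 ≤ Module.finrank ℝ S) {c : ℝ}
    (hq : ∀ x : EuclideanSpace ℝ (Fin N), x ∈ S → x ⬝ᵥ (M *ᵥ x) ≤ c * (x ⬝ᵥ x)) :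
    sEig hM k ≤ c := by
  classical
  set u := hM.eigenvectorBasis
  set σ := Tuple.sort hM.eigenvalues
  set t : Finset (Fin N) := (Finset.Ici k).image σ with ht
  have hcard : t.card = N - (k : ℕ) := by
    rw [ht, Finset.card_image_of_injective _ σ.injective, Fin.card_Ici]
  have hrank : Module.finrank ℝ (span ℝ (⇑u '' ↑t)) = N - (k : ℕ) := by
    rw [finrank_span_ob, hcard]
  have hd : ∀ i ∈ t, sEig hM k ≤ hM.eigenvalues i := by
    intro i hi
    obtain ⟨l, hl, rfl⟩ := Finset.mem_image.mp hi
    exact sEig_monotone hM (Finset.mem_Ici.mp hl)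
  obtain ⟨x, hx0, hxS, hxT⟩ := exists_ne_zero_mem_inf
    (S := S) (T := span ℝ (⇑u '' ↑t)) (by
      rw [hrank]; have := k.isLt; omega)
  have h1 : sEig hM k * (x ⬝ᵥ x) ≤ x ⬝ᵥ (M *ᵥ x) :=
    quad_ge_on_span u M hM.eigenvalues (fun i => hM.mulVec_eigenvectorBasis i) hd hxT
  have h2 := hq x hxS
  have hpos : 0 < x ⬝ᵥ x := by
    rw [← inner_eq_dot, real_inner_self_eq_norm_sq]; exact pow_pos (norm_pos_iff.mpr hx0) 2
  exact le_of_mul_le_mul_right (h1.trans h2) hpos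

lemma le_sEig_of_subspace (hM : M.IsHermitian) (k : Fin N)
    (S : Submodule ℝ (EuclideanSpace ℝ (Fin N)))
    (hdim : N - (k : ℕ) ≤ Module.finrank ℝ S) {c : ℝ}
    (hq : ∀ x : EuclideanSpace ℝ (Fin N), x ∈ S → c * (x ⬝ᵥ x) ≤ x ⬝ᵥ (M *ᵥ x)) :
    c ≤ sEig hM k := by
  classical
  set u := hM.eigenvectorBasis
  set σ := Tuple.sort hM.eigenvalues
  set t : Finset (Fin N) := (Finset.Iic k).image σ with ht
  have hcard : t.card = (k : ℕ) + 1 := by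
    rw [ht, Finset.card_image_of_injective _ σ.injective, Fin.card_Iic]
  have hrank : Module.finrank ℝ (span ℝ (⇑u '' ↑t)) = (k : ℕ) + 1 := by
    rw [finrank_span_ob, hcard]
  have hd : ∀ i ∈ t, hM.eigenvalues i ≤ sEig hM k := by
    intro i hi
    obtain ⟨l, hl, rfl⟩ := Finset.mem_image.mp hi
    exact sEig_monotone hM (Finset.mem_Iic.mp hl)
  obtain ⟨x, hx0, hxS, hxT⟩ := exists_ne_zero_mem_inf
    (S := S) (T := span ℝ (⇑u '' ↑t)) (by
      rw [hrank]; have := k.isLt; omega)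
  have h1 : x ⬝ᵥ (M *ᵥ x) ≤ sEig hM k * (x ⬝ᵥ x) :=
    quad_le_on_span u M hM.eigenvalues (fun i => hM.mulVec_eigenvectorBasis i) hd hxT
  have h2 := hq x hxS
  have hpos : 0 < x ⬝ᵥ x := by
    rw [← inner_eq_dot, real_inner_self_eq_norm_sq]; exact pow_pos (norm_pos_iff.mpr hx0) 2
  exact le_of_mul_le_mul_right (h2.trans h1) hpos

end Sorted

section MatComp

/-- bidiagonal difference matrix: `1` on diagonal, `-1` on superdiagonal. -/
def Amat (m : ℕ) : Matrix (Fin m) (Fin m) ℝ :=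
  Matrix.of fun i k => if (k : ℕ) = (i : ℕ) then 1 else if (k : ℕ) = (i : ℕ) + 1 then -1 else 0

lemma sum_fin_eq {m : ℕ} (c : ℕ) (g : Fin m → ℝ) :
    ∑ k : Fin m, (if (k : ℕ) = c then g k else 0) = if h : c < m then g ⟨c, h⟩ else 0 := by
  by_cases h : c < m
  · rw [dif_pos h, Finset.sum_eq_single ⟨c, h⟩]
    · simp
    · intro k _ hk
      rw [if_neg]
      intro hc
      exact hk (by exact Fin.ext hc)
    · intro hk; exact absurd (Finset.mem_univ _) hk
  · rw [dif_neg h]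
    apply Finset.sum_eq_zero
    intro k _
    rw [if_neg]
    have := k.isLt; omega

lemma sum_fin_eq' {m : ℕ} (c : ℕ) (g : Fin m → ℝ) :
    ∑ k : Fin m, (if (k : ℕ) + 1 = c then g k else 0)
      = if h : c - 1 < m ∧ 0 < c then g ⟨c - 1, h.1⟩ else 0 := by
  by_cases hc : 0 < c
  · have : ∀ k : Fin m, (if (k : ℕ) + 1 = c then g k else 0)
        = (if (k : ℕ) = c - 1 then g k else 0) := by
      intro k; congr 1; simp only [eq_iff_iff]; omega
    rw [Finset.sum_congr rfl (fun k _ => this k), sum_fin_eq]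
    by_cases h : c - 1 < m
    · rw [dif_pos h, dif_pos ⟨h, hc⟩]
    · rw [dif_neg h, dif_neg (by tauto)]
  · rw [dif_neg (by omega)]
    apply Finset.sum_eq_zero
    intro k _
    rw [if_neg (by omega)]

/-- `(M * Amat m) i j = M i j - M i (j-1)` -/
lemma mul_Amat {m : ℕ} (M : Matrix (Fin m) (Fin m) ℝ) (i j : Fin m) :
    (M * Amat m) i j
      = M i j - (if h : (j : ℕ) - 1 < m ∧ 0 < (j : ℕ) then M i ⟨(j : ℕ) - 1, h.1⟩ else 0) := by
  rw [Matrix.mul_apply]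
  have : ∀ k : Fin m, M i k * Amat m k j
      = (if (k : ℕ) = (j : ℕ) then M i k else 0)
        + (if (k : ℕ) + 1 = (j : ℕ) then -(M i k) else 0) := by
    intro k
    simp only [Amat, Matrix.of_apply]
    by_cases h1 : (j : ℕ) = (k : ℕ)
    · rw [if_pos h1, if_pos h1.symm, if_neg (by omega)]; ring
    · rw [if_neg h1, if_neg (Ne.symm h1)]
      by_cases h2 : (j : ℕ) = (k : ℕ) + 1
      · rw [if_pos h2, if_pos h2.symm]; ring
      · rw [if_neg h2, if_neg (by omega)]; ring
  rw [Finset.sum_congr rfl (fun k _ => this k), Finset.sum_add_distrib, sum_fin_eq, sum_fin_eq']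
  rw [dif_pos (j.isLt)]
  by_cases h : (j : ℕ) - 1 < m ∧ 0 < (j : ℕ)
  · rw [dif_pos h, dif_pos h]; ring
  · rw [dif_neg h, dif_neg h]; ring

/-- `(Amat m * M) i j = M i j - M (i+1) j` -/
lemma Amat_mul {m : ℕ} (M : Matrix (Fin m) (Fin m) ℝ) (i j : Fin m) :
    (Amat m * M) i j
      = M i j - (if h : (i : ℕ) + 1 < m then M ⟨(i : ℕ) + 1, h⟩ j else 0) := by
  rw [Matrix.mul_apply]
  have : ∀ k : Fin m, Amat m i k * M k j
      = (if (k : ℕ) = (i : ℕ) then M k j else 0)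
        + (if (k : ℕ) = (i : ℕ) + 1 then -(M k j) else 0) := by
    intro k
    simp only [Amat, Matrix.of_apply]
    by_cases h1 : (k : ℕ) = (i : ℕ)
    · rw [if_pos h1, if_pos h1, if_neg (by omega)]; ring
    · rw [if_neg h1, if_neg h1]
      by_cases h2 : (k : ℕ) = (i : ℕ) + 1
      · rw [if_pos h2, if_pos h2]; ring
      · rw [if_neg h2, if_neg h2]; ring
  rw [Finset.sum_congr rfl (fun k _ => this k), Finset.sum_add_distrib, sum_fin_eq, sum_fin_eq]
  rw [dif_pos (i.isLt)]
  by_cases h : (i : ℕ) + 1 < m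
  · rw [dif_pos h, dif_pos h]; ring
  · rw [dif_neg h, dif_neg h]; ring

/-- `((Amat m)ᵀ * M) i j = M i j - M (i-1) j` -/
lemma Amat_t_mul {m : ℕ} (M : Matrix (Fin m) (Fin m) ℝ) (i j : Fin m) :
    ((Amat m)ᵀ * M) i j
      = M i j - (if h : (i : ℕ) - 1 < m ∧ 0 < (i : ℕ) then M ⟨(i : ℕ) - 1, h.1⟩ j else 0) := by
  rw [Matrix.mul_apply]
  have : ∀ k : Fin m, (Amat m)ᵀ i k * M k j
      = (if (k : ℕ) = (i : ℕ) then M k j else 0)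
        + (if (k : ℕ) + 1 = (i : ℕ) then -(M k j) else 0) := by
    intro k
    simp only [Amat, Matrix.transpose_apply, Matrix.of_apply]
    by_cases h1 : (i : ℕ) = (k : ℕ)
    · rw [if_pos h1, if_pos h1.symm, if_neg (by omega)]; ring
    · rw [if_neg h1, if_neg (Ne.symm h1)]
      by_cases h2 : (i : ℕ) = (k : ℕ) + 1
      · rw [if_pos h2, if_pos h2.symm]; ring
      · rw [if_neg h2, if_neg (by omega)]; ring
  rw [Finset.sum_congr rfl (fun k _ => this k), Finset.sum_add_distrib, sum_fin_eq, sum_fin_eq']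
  rw [dif_pos (i.isLt)]
  by_cases h : (i : ℕ) - 1 < m ∧ 0 < (i : ℕ)
  · rw [dif_pos h, dif_pos h]; ring
  · rw [dif_neg h, dif_neg h]; ring

/-- `(M * (Amat m)ᵀ) i j = M i j - M i (j+1)` -/
lemma mul_Amat_t {m : ℕ} (M : Matrix (Fin m) (Fin m) ℝ) (i j : Fin m) :
    (M * (Amat m)ᵀ) i j
      = M i j - (if h : (j : ℕ) + 1 < m then M i ⟨(j : ℕ) + 1, h⟩ else 0) := by
  rw [Matrix.mul_apply]
  have : ∀ k : Fin m, M i k * (Amat m)ᵀ k j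
      = (if (k : ℕ) = (j : ℕ) then M i k else 0)
        + (if (k : ℕ) = (j : ℕ) + 1 then -(M i k) else 0) := by
    intro k
    simp only [Amat, Matrix.transpose_apply, Matrix.of_apply]
    by_cases h1 : (k : ℕ) = (j : ℕ)
    · rw [if_pos h1, if_pos h1, if_neg (by omega)]; ring
    · rw [if_neg h1, if_neg h1]
      by_cases h2 : (k : ℕ) = (j : ℕ) + 1
      · rw [if_pos h2, if_pos h2]; ring
      · rw [if_neg h2, if_neg h2]; ring
  rw [Finset.sum_congr rfl (fun k _ => this k), Finset.sum_add_distrib, sum_fin_eq, sum_fin_eq]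
  rw [dif_pos (j.isLt)]
  by_cases h : (j : ℕ) + 1 < m
  · rw [dif_pos h, dif_pos h]; ring
  · rw [dif_neg h, dif_neg h]; ring

end MatComp



lemma big1 (d : ℕ → ℝ) (m : ℕ) :
    (Amat m)ᵀ * (Matrix.diagonal (fun k : Fin m => d (k : ℕ)) * Amat m) = jacobiMat d m := by
  ext i j
  rw [Amat_t_mul]
  simp only [Matrix.diagonal_mul, Amat, jacobiMat, Matrix.of_apply]
  by_cases h1 : (i : ℕ) = (j : ℕ)
  · rw [if_pos h1, if_pos h1.symm]
    by_cases h0 : (i : ℕ) = 0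
    · rw [if_pos h0, dif_neg (by omega)]
      rw [show (i : ℕ) = 0 from h0]
      ring
    · rw [if_neg h0, dif_pos (⟨by omega, by omega⟩ : (i:ℕ) - 1 < m ∧ 0 < (i:ℕ))]
      rw [if_neg (by omega), if_pos (by omega)]
      ring
  · rw [if_neg h1]
    by_cases h2 : (i : ℕ) + 1 = (j : ℕ)
    · rw [if_neg (Ne.symm h1), if_pos (by omega), if_pos (Or.inl h2)]
      rw [Nat.min_eq_left (by omega)]
      by_cases h4 : (i : ℕ) - 1 < m ∧ 0 < (i : ℕ)
      · rw [dif_pos h4, if_neg (by omega), if_neg (by omega)]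
        ring
      · rw [dif_neg h4]; ring
    · by_cases h3 : (j : ℕ) + 1 = (i : ℕ)
      · rw [if_neg (Ne.symm h1), if_neg (by omega), if_pos (Or.inr h3)]
        rw [dif_pos (⟨by omega, by omega⟩ : (i:ℕ) - 1 < m ∧ 0 < (i:ℕ))]
        rw [if_pos (by omega)]
        rw [Nat.min_eq_right (by omega), show (i:ℕ) - 1 = (j:ℕ) by omega]
        ring
      · rw [if_neg (Ne.symm h1), if_neg (by omega), if_neg (by tauto)]
        by_cases h4 : (i : ℕ) - 1 < m ∧ 0 < (i : ℕ)
        · rw [dif_pos h4, if_neg (by omega), if_neg (by omega)]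
          ring
        · rw [dif_neg h4]; ring

section App
variable (ν : ℝ) (n : ℕ)

/-- `b_j = (j+ν)(j+1+ν)` -/
noncomputable def bfun (k : ℕ) : ℝ := ((k : ℝ) + ν) * ((k : ℝ) + 1 + ν)

/-- modified last entry -/
noncomputable def dfun (k : ℕ) : ℝ := if k + 1 = n then ((k : ℝ) + ν) else bfun ν k

variable {ν n}

lemma bfun_pos (hν : 0 < ν) (k : ℕ) : 0 < bfun ν k := by
  have h1 : (0:ℝ) ≤ (k:ℝ) := Nat.cast_nonneg k
  have : (0:ℝ) < (k : ℝ) + ν := by linarith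
  have : (0:ℝ) < (k : ℝ) + 1 + ν := by linarith
  unfold bfun; positivity

lemma dfun_pos (hν : 0 < ν) (k : ℕ) : 0 < dfun ν n k := by
  unfold dfun
  split_ifs
  · have h1 : (0:ℝ) ≤ (k:ℝ) := Nat.cast_nonneg k
    linarith
  · exact bfun_pos hν k

lemma dfun_le_bfun (hν : 0 < ν) (k : ℕ) : dfun ν n k ≤ bfun ν k := by
  unfold dfun bfun
  split_ifs
  · have h1 : (0:ℝ) ≤ (k:ℝ) := Nat.cast_nonneg k
    nlinarith
  · exact le_refl _

lemma LAt (i j : Fin n) :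
    (Lmat ν n * (Amat n)ᵀ) i j =
      if (j : ℕ) + 1 = n then 1 / (((j : ℕ) : ℝ) + ν)
      else if (i : ℕ) ≤ (j : ℕ) then
        1 / (((j : ℕ) : ℝ) + ν) - 1 / (((j : ℕ) : ℝ) + 1 + ν)
      else 0 := by
  rw [mul_Amat_t]
  simp only [Lmat, Matrix.of_apply]
  by_cases hj : (j : ℕ) + 1 = n
  · rw [if_pos hj, dif_neg (by omega)]
    rw [show (max (((i:ℕ)):ℝ) (((j:ℕ)):ℝ)) = (((j:ℕ)):ℝ) from max_eq_right
      (by exact_mod_cast (show (i:ℕ) ≤ (j:ℕ) by have := i.isLt; omega))]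
    ring
  · have hj' : (j : ℕ) + 1 < n := by have := j.isLt; omega
    rw [if_neg hj, dif_pos hj']
    push_cast
    by_cases hij : (i : ℕ) ≤ (j : ℕ)
    · rw [if_pos hij]
      rw [show (max (((i:ℕ)):ℝ) (((j:ℕ)):ℝ)) = (((j:ℕ)):ℝ) from max_eq_right
        (by exact_mod_cast hij)]
      rw [show (max (((i:ℕ)):ℝ) ((((j:ℕ)):ℝ) + 1)) = (((j:ℕ)):ℝ) + 1 from max_eq_right
        (by exact_mod_cast (show (i:ℕ) ≤ (j:ℕ)+1 by omega))]
    · rw [if_neg hij]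
      rw [show (max (((i:ℕ)):ℝ) (((j:ℕ)):ℝ)) = (((i:ℕ)):ℝ) from max_eq_left
        (by exact_mod_cast (show (j:ℕ) ≤ (i:ℕ) by omega))]
      rw [show (max (((i:ℕ)):ℝ) ((((j:ℕ)):ℝ) + 1)) = (((i:ℕ)):ℝ) from max_eq_left
        (by exact_mod_cast (show (j:ℕ)+1 ≤ (i:ℕ) by omega))]
      ring

lemma big2 (hν : 0 < ν) :
    Amat n * (Lmat ν n * (Amat n)ᵀ)
      = Matrix.diagonal (fun k : Fin n => (dfun ν n (k : ℕ))⁻¹) := by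
  ext i j
  rw [Amat_mul, LAt, Matrix.diagonal_apply]
  by_cases hj : (j : ℕ) + 1 = n
  · rw [if_pos hj]
    by_cases hi : (i : ℕ) + 1 < n
    · have hne : ¬ i = j := by rw [Fin.ext_iff]; omega
      rw [dif_pos hi, LAt, if_pos hj, if_neg hne]
      ring
    · have heq : i = j := by rw [Fin.ext_iff]; have := i.isLt; omega
      rw [dif_neg hi, if_pos heq]
      rw [show dfun ν n (i : ℕ) = ((i : ℕ) : ℝ) + ν from by
        unfold dfun; rw [if_pos (by have := i.isLt; omega)]]
      rw [show (i : ℕ) = (j : ℕ) from by have := i.isLt; omega]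
      rw [one_div]
      ring
  · rw [if_neg hj]
    have hj' : (j : ℕ) + 1 < n := by have := j.isLt; omega
    by_cases hi : (i : ℕ) + 1 < n
    · rw [dif_pos hi, LAt, if_neg hj]
      by_cases hij : (i : ℕ) = (j : ℕ)
      · have heq : i = j := by rw [Fin.ext_iff]; omega
        have h2 : ¬ ((⟨(i:ℕ)+1, hi⟩ : Fin n) : ℕ) ≤ (j : ℕ) := by
          show ¬ (i:ℕ)+1 ≤ (j:ℕ); omega
        rw [if_pos (show (i:ℕ) ≤ (j:ℕ) by omega), if_neg h2, if_pos heq]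
        rw [show dfun ν n (i : ℕ) = bfun ν (i : ℕ) from by
          unfold dfun; rw [if_neg (by omega)]]
        have h1 : (0:ℝ) < ((j : ℕ) : ℝ) + ν := by
          have := (Nat.cast_nonneg (j:ℕ) : (0:ℝ) ≤ ((j:ℕ):ℝ)); linarith
        have h3 : (0:ℝ) < ((j : ℕ) : ℝ) + 1 + ν := by linarith
        rw [show (i : ℕ) = (j : ℕ) from hij]
        unfold bfun
        rw [sub_zero]
        field_simp
        ring
      · have hne : ¬ i = j := by rw [Fin.ext_iff]; omega
        rw [if_neg hne]
        by_cases hle : (i : ℕ) ≤ (j : ℕ)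
        · have h2 : ((⟨(i:ℕ)+1, hi⟩ : Fin n) : ℕ) ≤ (j : ℕ) := by
            show (i:ℕ)+1 ≤ (j:ℕ); omega
          rw [if_pos hle, if_pos h2]
          ring
        · have h2 : ¬ ((⟨(i:ℕ)+1, hi⟩ : Fin n) : ℕ) ≤ (j : ℕ) := by
            show ¬ (i:ℕ)+1 ≤ (j:ℕ); omega
          rw [if_neg hle, if_neg h2]
          ring
    · have hne : ¬ i = j := by rw [Fin.ext_iff]; omega
      rw [dif_neg hi, if_neg (show ¬ (i : ℕ) ≤ (j : ℕ) by omega), if_neg hne]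
      ring

lemma Amat_blockTriangular (m : ℕ) : (Amat m).BlockTriangular id := by
  intro i j hij
  simp only [id] at hij
  simp only [Amat, Matrix.of_apply]
  rw [if_neg (by omega), if_neg (by omega)]

lemma Amat_det (m : ℕ) : (Amat m).det = 1 := by
  rw [Matrix.det_of_upperTriangular (Amat_blockTriangular m)]
  apply Finset.prod_eq_one
  intro i _
  simp [Amat]

lemma Amat_isUnit (m : ℕ) : IsUnit (Amat m) := by
  rw [Matrix.isUnit_iff_isUnit_det, Amat_det]
  exact isUnit_one

/-- quadratic form of a conjugated matrix -/
lemma quad_conj {m : ℕ} (C D : Matrix (Fin m) (Fin m) ℝ) (x : Fin m → ℝ) :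
    x ⬝ᵥ ((Cᵀ * (D * C)) *ᵥ x) = (C *ᵥ x) ⬝ᵥ (D *ᵥ (C *ᵥ x)) := by
  rw [← Matrix.mulVec_mulVec, Matrix.dotProduct_mulVec, Matrix.vecMul_transpose,
    ← Matrix.mulVec_mulVec]

lemma dot_diag_nonneg {m : ℕ} (g : Fin m → ℝ) (hg : ∀ i, 0 ≤ g i) (y : Fin m → ℝ) :
    0 ≤ y ⬝ᵥ (Matrix.diagonal g *ᵥ y) := by
  rw [dotProduct]
  apply Finset.sum_nonneg
  intro i _
  rw [Matrix.mulVec_diagonal]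
  have := hg i
  nlinarith [sq_nonneg (y i)]

lemma posdef_conj {m : ℕ} {D : Matrix (Fin m) (Fin m) ℝ} (hD : D.PosDef)
    (C : Matrix (Fin m) (Fin m) ℝ) (hC : IsUnit C) (hH : (Cᵀ * (D * C)).IsHermitian) :
    (Cᵀ * (D * C)).PosDef := by
  refine Matrix.PosDef.of_dotProduct_mulVec_pos hH fun x hx => ?_
  have hx' : C *ᵥ x ≠ 0 := by
    intro h
    exact hx ((Matrix.mulVec_injective_iff_isUnit.mpr hC).eq_iff.mp (by simpa using h))
  have := hD.dotProduct_mulVec_pos hx'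
  simpa [star_trivial, quad_conj] using this

lemma herm_conj {m : ℕ} (C : Matrix (Fin m) (Fin m) ℝ) (g : Fin m → ℝ) :
    (Cᵀ * (Matrix.diagonal g * C)).IsHermitian := by
  have : (Cᵀ * (Matrix.diagonal g * C))ᵀ = Cᵀ * (Matrix.diagonal g * C) := by
    rw [Matrix.transpose_mul, Matrix.transpose_mul, Matrix.transpose_transpose,
      Matrix.diagonal_transpose, Matrix.mul_assoc]
  unfold Matrix.IsHermitian
  rw [Matrix.conjTranspose_eq_transpose_of_trivial, this]

lemma jacobi_posdef (hν : 0 < ν) (d : ℕ → ℝ) (hd : ∀ k, 0 < d k) (m : ℕ) :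
    (jacobiMat d m).PosDef := by
  rw [← big1 d m]
  exact posdef_conj (Matrix.PosDef.diagonal (fun k => hd (k : ℕ))) (Amat m) (Amat_isUnit m)
    (herm_conj _ _)

/-- `L * T = 1` where `T = jacobiMat (dfun ν n) n`. -/
lemma L_mul_T (hν : 0 < ν) (hn : 1 ≤ n) :
    Lmat ν n * jacobiMat (dfun ν n) n = 1 := by
  have hA := Amat_isUnit (m := n)
  have hdet : IsUnit (Amat n).det := by rw [Amat_det]; exact isUnit_one
  have h2 := big2 (ν := ν) (n := n) hν
  have key : Amat n * (Lmat ν n * jacobiMat (dfun ν n) n) = Amat n := by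
    rw [← big1 (dfun ν n) n]
    calc Amat n * (Lmat ν n * ((Amat n)ᵀ * (Matrix.diagonal
          (fun k : Fin n => dfun ν n (k : ℕ)) * Amat n)))
        = (Amat n * (Lmat ν n * (Amat n)ᵀ)) * (Matrix.diagonal
          (fun k : Fin n => dfun ν n (k : ℕ)) * Amat n) := by
          rw [Matrix.mul_assoc, Matrix.mul_assoc]
      _ = (Matrix.diagonal (fun k : Fin n => (dfun ν n (k : ℕ))⁻¹) *
            Matrix.diagonal (fun k : Fin n => dfun ν n (k : ℕ))) * Amat n := by
          rw [h2, Matrix.mul_assoc]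
      _ = Amat n := by
          rw [Matrix.diagonal_mul_diagonal]
          rw [show (fun k : Fin n => (dfun ν n (k : ℕ))⁻¹ * dfun ν n (k : ℕ))
              = fun _ => (1:ℝ) from funext fun k =>
                inv_mul_cancel₀ (dfun_pos hν (k : ℕ)).ne']
          rw [Matrix.diagonal_one, Matrix.one_mul]
  calc Lmat ν n * jacobiMat (dfun ν n) n
      = (Amat n)⁻¹ * (Amat n * (Lmat ν n * jacobiMat (dfun ν n) n)) := by
        rw [← Matrix.mul_assoc, Matrix.nonsing_inv_mul _ hdet, Matrix.one_mul]
    _ = 1 := by rw [key, Matrix.nonsing_inv_mul _ hdet]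

/-- top-left submatrix of `jacobiMat (dfun ν n) n` agrees with `jacobiMat (bfun ν) (n-1)` -/
lemma T_submatrix (hn : 2 ≤ n) (p q : Fin (n - 1)) :
    jacobiMat (dfun ν n) n (Fin.castLE (by omega) p) (Fin.castLE (by omega) q)
      = jacobiMat (bfun ν) (n - 1) p q := by
  have hp := p.isLt
  have hq := q.isLt
  simp only [jacobiMat, Matrix.of_apply, Fin.coe_castLE]
  have hd : ∀ k : ℕ, k < n - 1 → dfun ν n k = bfun ν k := by
    intro k hk; unfold dfun; rw [if_neg (by omega)]
  by_cases h1 : (p : ℕ) = (q : ℕ)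
  · rw [if_pos h1, if_pos h1]
    by_cases h0 : (p : ℕ) = 0
    · rw [if_pos h0, if_pos h0, hd 0 (by omega)]
    · rw [if_neg h0, if_neg h0, hd ((p:ℕ)-1) (by omega), hd (p:ℕ) (by omega)]
  · rw [if_neg h1, if_neg h1]
    by_cases h2 : (p : ℕ) + 1 = (q : ℕ) ∨ (q : ℕ) + 1 = (p : ℕ)
    · rw [if_pos h2, if_pos h2, hd (min (p:ℕ) (q:ℕ)) (by omega)]
    · rw [if_neg h2, if_neg h2]

section Pad
variable {m N : ℕ}

/-- zero-padding linear map -/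
noncomputable def padLM (h : m ≤ N) : EuclideanSpace ℝ (Fin m) →ₗ[ℝ] EuclideanSpace ℝ (Fin N) where
  toFun x := WithLp.toLp 2 (fun i : Fin N => if hi : (i : ℕ) < m then x ⟨(i : ℕ), hi⟩ else 0)
  map_add' x y := by
    ext i
    by_cases hi : (i : ℕ) < m
    · simp [hi, PiLp.add_apply]
    · simp [hi, PiLp.add_apply]
  map_smul' c x := by
    ext i
    by_cases hi : (i : ℕ) < m
    · simp [hi, PiLp.smul_apply]
    · simp [hi, PiLp.smul_apply]

variable (h : m ≤ N)

lemma padLM_castLE (x : EuclideanSpace ℝ (Fin m)) (p : Fin m) :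
    (padLM h x : Fin N → ℝ) (Fin.castLE h p) = x p := by
  simp only [padLM, LinearMap.coe_mk, AddHom.coe_mk]
  rw [dif_pos (by simpa using p.isLt)]
  exact congrArg x (Fin.ext (by simp))

lemma padLM_zero (x : EuclideanSpace ℝ (Fin m)) (i : Fin N) (hi : ¬ (i : ℕ) < m) :
    (padLM h x : Fin N → ℝ) i = 0 := by
  simp only [padLM, LinearMap.coe_mk, AddHom.coe_mk]
  rw [dif_neg hi]

lemma padLM_injective : Function.Injective (padLM (h := h)) := by
  intro x y hxy
  ext p
  have h2 : (padLM h x : Fin N → ℝ) (Fin.castLE h p)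
      = (padLM h y : Fin N → ℝ) (Fin.castLE h p) := by rw [hxy]
  rwa [padLM_castLE, padLM_castLE] at h2

lemma sum_pad (f : Fin N → ℝ) (hf : ∀ i : Fin N, ¬ ((i : ℕ) < m) → f i = 0) :
    ∑ i, f i = ∑ p : Fin m, f (Fin.castLE h p) := by
  have e1 : ∑ i ∈ Finset.univ.map (Fin.castLEEmb h), f i
      = ∑ p : Fin m, f (Fin.castLE h p) := by
    rw [Finset.sum_map]
    exact Finset.sum_congr rfl fun p _ => by simp
  rw [← e1]
  symm
  apply Finset.sum_subset (Finset.subset_univ _)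
  intro i _ hi
  apply hf
  intro hlt
  exact hi (Finset.mem_map.mpr ⟨⟨(i : ℕ), hlt⟩, Finset.mem_univ _, by
    simp [Fin.castLEEmb, Fin.ext_iff]⟩)

lemma padLM_dot_self (x : EuclideanSpace ℝ (Fin m)) :
    (padLM h x : Fin N → ℝ) ⬝ᵥ (padLM h x : Fin N → ℝ) = x ⬝ᵥ x := by
  rw [dotProduct, dotProduct,
    sum_pad h _ (fun i hi => by rw [padLM_zero h x i hi]; ring)]
  exact Finset.sum_congr rfl fun p _ => by rw [padLM_castLE]

lemma padLM_quad (T : Matrix (Fin N) (Fin N) ℝ) (B : Matrix (Fin m) (Fin m) ℝ)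
    (hsub : ∀ p q : Fin m, T (Fin.castLE h p) (Fin.castLE h q) = B p q)
    (x : EuclideanSpace ℝ (Fin m)) :
    (padLM h x : Fin N → ℝ) ⬝ᵥ (T *ᵥ (padLM h x : Fin N → ℝ)) = x ⬝ᵥ (B *ᵥ x) := by
  rw [dotProduct, dotProduct,
    sum_pad h _ (fun i hi => by rw [padLM_zero h x i hi]; ring)]
  refine Finset.sum_congr rfl fun p _ => ?_
  rw [padLM_castLE]
  congr 1
  rw [Matrix.mulVec, Matrix.mulVec, dotProduct, dotProduct,
    sum_pad h _ (fun i hi => by rw [padLM_zero h x i hi]; ring)]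
  exact Finset.sum_congr rfl fun q _ => by rw [padLM_castLE, hsub]

lemma finrank_comap_padLM (W : Submodule ℝ (EuclideanSpace ℝ (Fin N))) :
    Module.finrank ℝ W + m - N ≤ Module.finrank ℝ (W.comap (padLM h)) := by
  have h1 : Submodule.map (padLM h) (W.comap (padLM h)) = LinearMap.range (padLM h) ⊓ W :=
    Submodule.map_comap_eq _ _
  have h2 : Module.finrank ℝ (LinearMap.range (padLM (h := h))) = m := by
    rw [LinearMap.finrank_range_of_inj (padLM_injective h), finrank_euclideanSpace,
      Fintype.card_fin]
  have h3 := Submodule.finrank_sup_add_finrank_inf_eq (LinearMap.range (padLM (h := h))) W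
  have h4 : Module.finrank ℝ ↥(LinearMap.range (padLM (h := h)) ⊔ W) ≤ N := by
    simpa [finrank_euclideanSpace] using
      Submodule.finrank_le (LinearMap.range (padLM (h := h)) ⊔ W)
  have h5 : Module.finrank ℝ ↥(Submodule.map (padLM h) (W.comap (padLM h)))
      ≤ Module.finrank ℝ ↥(W.comap (padLM h)) := Submodule.finrank_map_le _ _
  rw [h1] at h5
  omega

end Pad

end App

/-- For `ν > 0` and `n ≥ 2`, with `B_m(ν)` the Jacobi matrix built from
`b_j = (j+ν)(j+1+ν)` and `β_{1,m}(ν) ≤ … ≤ β_{m,m}(ν)` its eigenvalues, all eigenvalues of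
`B_m(ν)` are positive and for every `j ∈ {1,…,n−1}`:
`1/β_{n−j+1,n}(ν) ≤ μ_{j,n}(ν) ≤ 1/β_{n−j,n−1}(ν)`. -/
theorem hilbert_L_matrix_jacobi_eigenvalue_bounds (ν : ℝ) (hν : 0 < ν) (n : ℕ) (hn : 2 ≤ n) :
    (∀ m k : ℕ, k < m → 0 < betaL ν m k) ∧
      (∀ j : ℕ, 1 ≤ j → j ≤ n - 1 →
        1 / betaL ν n (n - j) ≤ muL ν n (j - 1) ∧
          muL ν n (j - 1) ≤ 1 / betaL ν (n - 1) (n - j - 1)) := by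
  -- the sequence used in `betaL` is `bfun ν`
  have hbb : (fun j : ℕ => ((j : ℝ) + ν) * ((j : ℝ) + 1 + ν)) = bfun ν := rfl
  -- Part 1 : positivity of all Jacobi eigenvalues
  have part1 : ∀ m k : ℕ, k < m → 0 < betaL ν m k := by
    intro m k hk
    have hPD : (jacobiMat (bfun ν) m).PosDef := jacobi_posdef hν (bfun ν) (bfun_pos hν) m
    unfold betaL
    rw [dif_pos hk]
    exact hPD.eigenvalues_pos _
  refine ⟨part1, ?_⟩
  intro j hj1 hj2
  have hjn : j ≤ n - 1 := hj2
  -- abbreviations for the L-matrix spectral data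
  set hL : (Lmat ν n).IsHermitian := Lmat_isHermitian ν n with hLdef
  set lam : Fin n → ℝ := hL.eigenvalues with hlam
  set σL := Tuple.sort lam with hσ
  set u := hL.eigenvectorBasis with hu
  -- the inverse matrix T
  set Tm : Matrix (Fin n) (Fin n) ℝ := jacobiMat (dfun ν n) n with hTm
  have hLT : Lmat ν n * Tm = 1 := L_mul_T hν (by omega)
  have hTL : Tm * Lmat ν n = 1 := mul_eq_one_comm.mp hLT
  have hTm_pd : Tm.PosDef := jacobi_posdef hν (dfun ν n) (dfun_pos hν) n
  have hL_pd : (Lmat ν n).PosDef := by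
    have h1 : Tm⁻¹ = Lmat ν n := Matrix.inv_eq_right_inv hTL
    rw [← h1]
    exact hTm_pd.inv
  have lam_pos : ∀ i, 0 < lam i := fun i => hL_pd.eigenvalues_pos i
  have sEig_L_pos : ∀ kk : Fin n, 0 < sEig hL kk := fun kk => lam_pos _
  -- eigenvectors of L are eigenvectors of T with inverse eigenvalues
  have hTu : ∀ i, Tm *ᵥ ⇑(u i) = (lam i)⁻¹ • ⇑(u i) := by
    intro i
    have h1 : Lmat ν n *ᵥ ⇑(u i) = lam i • ⇑(u i) := hL.mulVec_eigenvectorBasis i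
    have e1 : Tm *ᵥ (Lmat ν n *ᵥ ⇑(u i)) = ⇑(u i) := by
      rw [Matrix.mulVec_mulVec, hTL, Matrix.one_mulVec]
    rw [h1, Matrix.mulVec_smul] at e1
    conv_rhs => rw [← e1]
    rw [inv_smul_smul₀ (lam_pos i).ne']
  -- the comparison `x T x ≤ x B x`
  have T_le_B : ∀ x : Fin n → ℝ,
      x ⬝ᵥ (Tm *ᵥ x) ≤ x ⬝ᵥ (jacobiMat (bfun ν) n *ᵥ x) := by
    intro x
    rw [hTm, ← big1 (dfun ν n) n, ← big1 (bfun ν) n, quad_conj, quad_conj]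
    set y := Amat n *ᵥ x with hy
    rw [dotProduct, dotProduct]
    refine Finset.sum_le_sum fun i _ => ?_
    rw [Matrix.mulVec_diagonal, Matrix.mulVec_diagonal]
    have h1 := dfun_le_bfun (n := n) hν (i : ℕ)
    nlinarith [sq_nonneg (y i)]
  -- index bookkeeping
  have hkn : j - 1 < n := by omega
  set kF : Fin n := ⟨j - 1, hkn⟩ with hkF
  have hmu : muL ν n (j - 1) = sEig hL kF := by
    unfold muL evals sEig
    rw [dif_pos hkn]
  have lamk_pos : 0 < sEig hL kF := sEig_L_pos kF
  constructor
  · -- lower bound : 1 / betaL ν n (n-j) ≤ muL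
    have hnj : n - j < n := by omega
    have hBn := jacobiMat_isHermitian (fun j => ((j : ℝ) + ν) * ((j : ℝ) + 1 + ν)) n
    have hbeta : betaL ν n (n - j) = sEig hBn ⟨n - j, hnj⟩ := by
      unfold betaL sEig
      rw [dif_pos hnj]
    have A1 : 1 / sEig hL kF ≤ sEig hBn ⟨n - j, hnj⟩ := by
      apply le_sEig_of_subspace hBn ⟨n - j, hnj⟩
        (span ℝ (⇑u '' ↑((Finset.Iic kF).image σL)))
      · rw [finrank_span_ob, Finset.card_image_of_injective _ σL.injective, Fin.card_Iic]
        show n - (n - j) ≤ (j - 1) + 1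
        omega
      · intro x hx
        have step1 : (1 / sEig hL kF) * (x ⬝ᵥ x) ≤ x ⬝ᵥ (Tm *ᵥ x) := by
          apply quad_ge_on_span u Tm (fun i => (lam i)⁻¹) hTu ?_ hx
          intro i hi
          obtain ⟨l, hl, rfl⟩ := Finset.mem_image.mp hi
          have h1 : sEig hL l ≤ sEig hL kF := sEig_monotone hL (Finset.mem_Iic.mp hl)
          have h2 := sEig_L_pos l
          have h3 := one_div_le_one_div_of_le h2 h1
          rw [one_div (sEig hL l)] at h3
          exact h3
        exact step1.trans (T_le_B x)
    rw [hbeta, hmu]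
    have hbpos : 0 < sEig hBn ⟨n - j, hnj⟩ := by
      rw [← hbeta]; exact part1 n (n - j) hnj
    have h4 := one_div_le_one_div_of_le (by positivity : 0 < 1 / sEig hL kF) A1
    rwa [one_div_one_div] at h4
  · -- upper bound : muL ≤ 1 / betaL ν (n-1) (n-j-1)
    have hnj1 : n - j - 1 < n - 1 := by omega
    have hB' := jacobiMat_isHermitian (fun j => ((j : ℝ) + ν) * ((j : ℝ) + 1 + ν)) (n - 1)
    have hbeta : betaL ν (n - 1) (n - j - 1) = sEig hB' ⟨n - j - 1, hnj1⟩ := by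
      unfold betaL sEig
      rw [dif_pos hnj1]
    have hmn : n - 1 ≤ n := by omega
    set W := span ℝ (⇑u '' ↑((Finset.Ici kF).image σL)) with hW
    have hWrank : Module.finrank ℝ W = n - (j - 1) := by
      rw [hW, finrank_span_ob, Finset.card_image_of_injective _ σL.injective, Fin.card_Ici]
    have B1 : sEig hB' ⟨n - j - 1, hnj1⟩ ≤ 1 / sEig hL kF := by
      apply sEig_le_of_subspace hB' ⟨n - j - 1, hnj1⟩ (W.comap (padLM hmn))
      · have h5 := finrank_comap_padLM hmn W
        rw [hWrank] at h5
        show (n - j - 1) + 1 ≤ _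
        omega
      · intro x hx
        have hy : padLM hmn x ∈ W := Submodule.mem_comap.mp hx
        have e1 : x ⬝ᵥ (jacobiMat (bfun ν) (n - 1) *ᵥ x)
            = (padLM hmn x : Fin n → ℝ) ⬝ᵥ (Tm *ᵥ (padLM hmn x : Fin n → ℝ)) := by
          rw [padLM_quad hmn Tm (jacobiMat (bfun ν) (n - 1)) (fun p q => T_submatrix hn p q) x]
        have e2 : (padLM hmn x : Fin n → ℝ) ⬝ᵥ (padLM hmn x : Fin n → ℝ) = x ⬝ᵥ x :=
          padLM_dot_self hmn x
        have step1 : (padLM hmn x : Fin n → ℝ) ⬝ᵥ (Tm *ᵥ (padLM hmn x : Fin n → ℝ))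
            ≤ (1 / sEig hL kF) * ((padLM hmn x : Fin n → ℝ) ⬝ᵥ (padLM hmn x : Fin n → ℝ)) := by
          apply quad_le_on_span u Tm (fun i => (lam i)⁻¹) hTu ?_ hy
          intro i hi
          obtain ⟨l, hl, rfl⟩ := Finset.mem_image.mp hi
          have h1 : sEig hL kF ≤ sEig hL l := sEig_monotone hL (Finset.mem_Ici.mp hl)
          have h3 := one_div_le_one_div_of_le lamk_pos h1
          rw [one_div (sEig hL l)] at h3
          exact h3
        calc x ⬝ᵥ (jacobiMat (fun j : ℕ => ((j : ℝ) + ν) * ((j : ℝ) + 1 + ν)) (n - 1) *ᵥ x)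
            = (padLM hmn x : Fin n → ℝ) ⬝ᵥ (Tm *ᵥ (padLM hmn x : Fin n → ℝ)) := e1
          _ ≤ (1 / sEig hL kF) * ((padLM hmn x : Fin n → ℝ) ⬝ᵥ (padLM hmn x : Fin n → ℝ)) :=
              step1
          _ = (1 / sEig hL kF) * (x ⬝ᵥ x) := by rw [e2]
    rw [hbeta, hmu]
    have hbpos : 0 < sEig hB' ⟨n - j - 1, hnj1⟩ := by
      rw [← hbeta]; exact part1 (n - 1) (n - j - 1) hnj1
    have h4 := one_div_le_one_div_of_le hbpos B1
    rwa [one_div_one_div] at h4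
end

section
/- For n ∈ ℕ, index matrices by i,j ∈ {1,…,n} and define: the Hilbert L-matrix L̃_n with entries (L̃_n)_{i,j} = 1/max(i,j) (which coincides with L_n(1) up to reindexing); the Cesàro matrix C_n with (C_n)_{i,j} = 1/i if j ≤ i and 0 otherwise; and the matrix M_n with (M_n)_{i,j} = Σ_{l=max(i,j)}^{n} 1/l². Then C_n is invertible and L̃_n = C_n M_n C_n^{−1}, i.e., L̃_n C_n = C_n M_n; consequently L̃_n and M_n have the same eigenvalues. -/
open Finset Polynomial

/-- The Hilbert L-matrix with 1-based entries `1/max(i,j)`, `i,j ∈ {1,…,n}`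
(indexed here by `Fin n`, with index `i` standing for `i+1`). -/
noncomputable def Ltil (n : ℕ) : Matrix (Fin n) (Fin n) ℝ :=
  Matrix.of fun i j => 1 / ((max ((i : ℕ) + 1) ((j : ℕ) + 1) : ℕ) : ℝ)

/-- The Cesàro matrix `(C_n)_{i,j} = 1/i` for `1 ≤ j ≤ i ≤ n`, `0` otherwise. -/
noncomputable def cesaro (n : ℕ) : Matrix (Fin n) (Fin n) ℝ :=
  Matrix.of fun i j => if (j : ℕ) ≤ (i : ℕ) then 1 / ((i : ℕ) + 1 : ℝ) else 0

/-- The Hardy-form matrix `(M_n)_{i,j} = Σ_{l=max(i,j)}^{n} 1/l²`. -/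
noncomputable def hardyMat (n : ℕ) : Matrix (Fin n) (Fin n) ℝ :=
  Matrix.of fun i j =>
    ∑ l ∈ Finset.Icc (max ((i : ℕ) + 1) ((j : ℕ) + 1)) n, 1 / ((l : ℕ) : ℝ) ^ 2

lemma icc_to_range (n a : ℕ) (ha : 1 ≤ a) (f : ℕ → ℝ) :
    ∑ l ∈ Finset.Icc a n, f l
      = ∑ m ∈ Finset.range n, if a ≤ 1 + m then f (1 + m) else 0 := by
  have h : Finset.Icc a n = (Finset.Icc 1 n).filter (fun l => a ≤ l) := by
    ext l; simp only [Finset.mem_Icc, Finset.mem_filter]; omega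
  rw [h, Finset.sum_filter, ← Finset.Ico_add_one_right_eq_Icc, Finset.sum_Ico_eq_sum_range]
  simp

lemma count_sum (n d : ℕ) (hd : d < n) (x : ℝ) :
    ∑ k ∈ Finset.range n, (if k ≤ d then x else 0) = (d + 1 : ℕ) * x := by
  rw [← Finset.sum_subset (Finset.range_subset_range.2 hd)
    (fun k _ hk => by rw [if_neg (by simp at hk; omega)])]
  rw [Finset.sum_congr rfl (fun k hk => if_pos (by simp at hk; omega)),
    Finset.sum_const, Finset.card_range, nsmul_eq_mul]

lemma keysum (n i j : ℕ) (hi : i < n) :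
    (∑ k ∈ Finset.range n,
      (if k ≤ i then 1 / ((i : ℝ) + 1) else 0) *
        ∑ l ∈ Finset.Icc (max (k + 1) (j + 1)) n, 1 / ((l : ℕ) : ℝ) ^ 2)
    = ∑ m ∈ Finset.range n,
      1 / ((max (i + 1) (m + 1) : ℕ) : ℝ) * (if j ≤ m then 1 / ((m : ℝ) + 1) else 0) := by
  have him : ((i : ℝ) + 1) ≠ 0 := by positivity
  calc
    (∑ k ∈ Finset.range n,
      (if k ≤ i then 1 / ((i : ℝ) + 1) else 0) *
        ∑ l ∈ Finset.Icc (max (k + 1) (j + 1)) n, 1 / ((l : ℕ) : ℝ) ^ 2)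
      = ∑ k ∈ Finset.range n, ∑ m ∈ Finset.range n,
          (if k ≤ i then 1 / ((i : ℝ) + 1) else 0) *
            (if max (k + 1) (j + 1) ≤ 1 + m then 1 / (((1 + m : ℕ) : ℝ)) ^ 2 else 0) := by
        refine Finset.sum_congr rfl fun k _ => ?_
        rw [icc_to_range n _ (by omega), Finset.mul_sum]
    _ = ∑ m ∈ Finset.range n, ∑ k ∈ Finset.range n,
          (if k ≤ i then 1 / ((i : ℝ) + 1) else 0) *
            (if max (k + 1) (j + 1) ≤ 1 + m then 1 / (((1 + m : ℕ) : ℝ)) ^ 2 else 0) :=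
        Finset.sum_comm
    _ = ∑ m ∈ Finset.range n,
          (if j ≤ m then ((min (i + 1) (m + 1) : ℕ) : ℝ) *
            (1 / ((i : ℝ) + 1) * (1 / ((m : ℝ) + 1) ^ 2)) else 0) := by
        refine Finset.sum_congr rfl fun m hm => ?_
        simp only [Finset.mem_range] at hm
        by_cases hjm : j ≤ m
        · rw [if_pos hjm]
          have hterm : ∀ k, (if k ≤ i then 1 / ((i : ℝ) + 1) else 0) *
              (if max (k + 1) (j + 1) ≤ 1 + m then 1 / (((1 + m : ℕ) : ℝ)) ^ 2 else 0)
              = if k ≤ min i m then 1 / ((i : ℝ) + 1) * (1 / ((m : ℝ) + 1) ^ 2) else 0 := by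
            intro k
            have h2 : (k + 1 ≤ 1 + m ∧ j + 1 ≤ 1 + m) ↔ k ≤ m := by omega
            rw [if_congr (max_le_iff.trans h2) rfl rfl, if_congr le_min_iff rfl rfl]
            split_ifs with h1 h2 h3 <;>
              first
                | (push_cast; ring1)
                | (exfalso; tauto)
                | simp
          rw [Finset.sum_congr rfl (fun k _ => hterm k), count_sum n (min i m) (by omega)]
          have hmin : min i m + 1 = min (i + 1) (m + 1) := by omega
          rw [hmin]
        · rw [if_neg hjm]
          refine Finset.sum_eq_zero fun k _ => ?_
          have hmax : ¬ (max (k + 1) (j + 1) ≤ 1 + m) := by rw [max_le_iff]; omega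
          rw [if_neg hmax, mul_zero]
    _ = ∑ m ∈ Finset.range n,
          1 / ((max (i + 1) (m + 1) : ℕ) : ℝ) * (if j ≤ m then 1 / ((m : ℝ) + 1) else 0) := by
        refine Finset.sum_congr rfl fun m hm => ?_
        simp only [Finset.mem_range] at hm
        by_cases hjm : j ≤ m
        · rw [if_pos hjm, if_pos hjm]
          have hmm : ((m : ℝ) + 1) ≠ 0 := by positivity
          rcases le_total i m with h | h
          · rw [min_eq_left (by omega), max_eq_right (by omega)]
            push_cast
            field_simp
          · rw [min_eq_right (by omega), max_eq_left (by omega)]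
            push_cast
            field_simp
        · simp [hjm]

lemma cesaro_mul_eq (n : ℕ) : Ltil n * cesaro n = cesaro n * hardyMat n := by
  ext i j
  rw [Matrix.mul_apply, Matrix.mul_apply]
  simp only [Ltil, cesaro, hardyMat, Matrix.of_apply]
  rw [Fin.sum_univ_eq_sum_range
      (fun k => 1 / ((max ((i : ℕ) + 1) (k + 1) : ℕ) : ℝ) *
        (if (j : ℕ) ≤ k then 1 / ((k : ℝ) + 1) else 0)),
    Fin.sum_univ_eq_sum_range
      (fun k => (if k ≤ (i : ℕ) then 1 / ((i : ℝ) + 1) else 0) *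
        ∑ l ∈ Finset.Icc (max (k + 1) ((j : ℕ) + 1)) n, 1 / ((l : ℕ) : ℝ) ^ 2)]
  exact (keysum n i j i.isLt).symm

lemma cesaro_det_ne_zero (n : ℕ) : (cesaro n).det ≠ 0 := by
  have h : (cesaro n).BlockTriangular OrderDual.toDual := by
    intro i j hij
    simp only [OrderDual.toDual_lt_toDual] at hij
    simp only [cesaro, Matrix.of_apply]
    rw [if_neg (by exact_mod_cast not_le.2 hij)]
  rw [Matrix.det_of_lowerTriangular _ h]
  refine Finset.prod_ne_zero_iff.2 fun i _ => ?_
  simp only [cesaro, Matrix.of_apply, if_pos le_rfl]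
  positivity

/-- The Cesàro matrix `C_n` is invertible, `L̃_n = C_n M_n C_n^{−1}` (i.e.
`L̃_n C_n = C_n M_n`), and consequently `L̃_n` and `M_n` have the same eigenvalues (equal
characteristic polynomials). -/
theorem hilbert_L_matrix_similar_hardy (n : ℕ) :
    IsUnit (cesaro n).det ∧
      Ltil n * cesaro n = cesaro n * hardyMat n ∧
      Ltil n = cesaro n * hardyMat n * (cesaro n)⁻¹ ∧
      (Ltil n).charpoly = (hardyMat n).charpoly := by
  have hdet : IsUnit (cesaro n).det := isUnit_iff_ne_zero.2 (cesaro_det_ne_zero n)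
  have hmul := cesaro_mul_eq n
  refine ⟨hdet, hmul, ?_, ?_⟩
  · rw [← hmul, Matrix.mul_assoc, Matrix.mul_nonsing_inv _ hdet, Matrix.mul_one]
  · -- charpoly equality via conjugation over ℝ[X]
    set P : Matrix (Fin n) (Fin n) ℝ[X] :=
      (Polynomial.C : ℝ →+* ℝ[X]).mapMatrix (cesaro n) with hP
    have hPdet : IsUnit P.det := by
      rw [hP, ← RingHom.map_det]
      exact Polynomial.isUnit_C.2 (isUnit_iff_ne_zero.2 (cesaro_det_ne_zero n))
    have hcomm : Matrix.charmatrix (Ltil n) * P = P * Matrix.charmatrix (hardyMat n) := by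
      rw [Matrix.charmatrix, Matrix.charmatrix, sub_mul, mul_sub]
      have hs : Matrix.scalar (Fin n) (X : ℝ[X]) * P = P * Matrix.scalar (Fin n) (X : ℝ[X]) :=
        (Matrix.scalar_commute (X : ℝ[X]) (fun r => Commute.all _ _) P)
      rw [hs, ← RingHom.map_mul, ← RingHom.map_mul, hmul]
    have hdeteq : (Matrix.charmatrix (Ltil n)).det * P.det
        = (Matrix.charmatrix (hardyMat n)).det * P.det := by
      rw [← Matrix.det_mul, hcomm, Matrix.det_mul, mul_comm]
    unfold Matrix.charpoly
    exact hPdet.mul_right_cancel hdeteq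
end
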